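/- arXiv:1309.6034 — 6 statements merged into one kernel-verified Lean document; each statement's English description precedes it below -/
import Mathlib

section
/- There exist a constant c > 0 and infinitely many positive integers n for which the following holds: there is a set W_n ⊆ {1, …, n} of squarefree positive integers such that for every function f : W_n → {-1, +1} there exists a positive integer a with |Σ_{b ∈ W_n, a ∣ b} f(b)| ≥ n^{c / log log n}. -/
namespace HAPaux

def M : Fin 7 → Fin 7 → ℕ :=
  ![![1,1,0,0,1,0,1],
    ![1,1,1,0,0,1,0],
    ![0,1,1,1,0,0,1],
    ![1,0,1,1,1,0,0],
    ![0,1,0,1,1,1,0],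
    ![0,0,1,0,1,1,1],
    ![1,0,0,1,0,1,1]]

lemma M_zero_or_one (i j : Fin 7) : M i j = 0 ∨ M i j = 1 := by
  revert i j; decide

lemma M_cols_distinct (y y' : Fin 7) (h : ∀ i, M i y = M i y') : y = y' := by
  revert h; revert y y'; decide

set_option maxHeartbeats 1000000 in
lemma base_identity (x : Fin 7 → ℝ) :
    ∑ i, (∑ j, (M i j : ℝ) * x j) ^ 2
      = 2 * ∑ j, (x j) ^ 2 + 2 * (∑ j, x j) ^ 2 := by
  simp only [Fin.sum_univ_seven, (show M 0 0 = 1 from rfl), (show M 0 1 = 1 from rfl), (show M 0 2 = 0 from rfl), (show M 0 3 = 0 from rfl), (show M 0 4 = 1 from rfl), (show M 0 5 = 0 from rfl), (show M 0 6 = 1 from rfl), (show M 1 0 = 1 from rfl), (show M 1 1 = 1 from rfl), (show M 1 2 = 1 from rfl), (show M 1 3 = 0 from rfl), (show M 1 4 = 0 from rfl), (show M 1 5 = 1 from rfl), (show M 1 6 = 0 from rfl), (show M 2 0 = 0 from rfl), (show M 2 1 = 1 from rfl), (show M 2 2 = 1 from rfl), (show M 2 3 = 1 from rfl), (show M 2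 4 = 0 from rfl), (show M 2 5 = 0 from rfl), (show M 2 6 = 1 from rfl), (show M 3 0 = 1 from rfl), (show M 3 1 = 0 from rfl), (show M 3 2 = 1 from rfl), (show M 3 3 = 1 from rfl), (show M 3 4 = 1 from rfl), (show M 3 5 = 0 from rfl), (show M 3 6 = 0 from rfl), (show M 4 0 = 0 from rfl), (show M 4 1 = 1 from rfl), (show M 4 2 = 0 from rfl), (show M 4 3 = 1 from rfl), (show M 4 4 = 1 from rfl), (show M 4 5 = 1 from rfl), (show M 4 6 = 0 from rfl), (show M 5 0 = 0 from rfl), (show M 5 1 = 0 from rfl), (show M 5 2 = 1 from rfl), (show M 5 3 = 0 from rfl), (show M 5 4 = 1 from rfl), (show M 5 5 = 1 from rfl), (show M 5 6 = 1 from rfl), (show M 6 0 = 1 from rfl), (show M 6 1 = 0 from rfl), (show M 6 2 = 0 from rfl), (show M 6 3 = 1 from rfl), (show M 6 4 = 0 from rfl), (show M 6 5 = 1 from rfl), (show M 6 6 = 1 from rfl)]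
  push_cast
  ring

lemma base_ineq (x : Fin 7 → ℝ) :
    2 * ∑ j, (x j) ^ 2 ≤ ∑ i, (∑ j, (M i j : ℝ) * x j) ^ 2 := by
  rw [base_identity]
  nlinarith [sq_nonneg (∑ j, x j)]

noncomputable def A (t : ℕ) (r c : Fin t → Fin 7) : ℝ := ∏ j, (M (r j) (c j) : ℝ)

lemma tensor_ineq : ∀ (t : ℕ) (g : (Fin t → Fin 7) → ℝ),
    2 ^ t * ∑ c, (g c) ^ 2 ≤ ∑ r, (∑ c, A t r c * g c) ^ 2 := by
  intro t
  induction t with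
  | zero =>
    intro g
    simp [A, Fintype.sum_unique]
  | succ t ih =>
    intro g
    have hsum : ∀ (F : (Fin (t+1) → Fin 7) → ℝ),
        ∑ r, F r = ∑ i : Fin 7, ∑ r : Fin t → Fin 7, F (Fin.cons i r) := by
      intro F
      rw [← Equiv.sum_comp (Fin.consEquiv (fun _ => Fin 7)) F]
      rw [show (fun p => F ((Fin.consEquiv (fun _ => Fin 7)) p))
          = (fun p : Fin 7 × (Fin t → Fin 7) => F (Fin.cons p.1 p.2)) from
        funext (fun p => by congr 1)]
      exact Fintype.sum_prod_type _
    have hA : ∀ (i₀ j₀ : Fin 7) (r c : Fin t → Fin 7),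
        A (t+1) (Fin.cons i₀ r) (Fin.cons j₀ c) = (M i₀ j₀ : ℝ) * A t r c := by
      intro i₀ j₀ r c
      simp [A, Fin.prod_univ_succ]
    set G : Fin 7 → (Fin t → Fin 7) → ℝ := fun i c => g (Fin.cons i c) with hG
    have LHS : ∑ c, (g c)^2 = ∑ j₀ : Fin 7, ∑ c, (G j₀ c)^2 := by
      rw [hsum (fun c => (g c)^2)]
    set H : (Fin t → Fin 7) → Fin 7 → ℝ := fun r j₀ => ∑ c, A t r c * G j₀ c with hH
    have RHSrw : ∑ r, (∑ c, A (t+1) r c * g c) ^ 2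
        = ∑ i₀ : Fin 7, ∑ r, (∑ j₀ : Fin 7, (M i₀ j₀ : ℝ) * H r j₀) ^ 2 := by
      rw [hsum (fun r => (∑ c, A (t+1) r c * g c) ^ 2)]
      refine Finset.sum_congr rfl (fun i₀ _ => Finset.sum_congr rfl (fun r _ => ?_))
      congr 1
      rw [hsum (fun c => A (t+1) (Fin.cons i₀ r) c * g c)]
      refine Finset.sum_congr rfl (fun j₀ _ => ?_)
      rw [hH]
      simp only [Finset.mul_sum]
      refine Finset.sum_congr rfl (fun c _ => ?_)
      rw [hA]
      ring
    rw [RHSrw, LHS]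
    have step1 : ∑ r : (Fin t → Fin 7), 2 * ∑ j₀ : Fin 7, (H r j₀)^2
        ≤ ∑ i₀ : Fin 7, ∑ r, (∑ j₀ : Fin 7, (M i₀ j₀ : ℝ) * H r j₀) ^ 2 := by
      rw [Finset.sum_comm (γ := Fin 7)]
      exact Finset.sum_le_sum (fun r _ => base_ineq (H r))
    refine le_trans ?_ step1
    have step2 : ∀ j₀ : Fin 7, 2^t * ∑ c, (G j₀ c)^2 ≤ ∑ r, (H r j₀)^2 := fun j₀ => ih (G j₀)
    calc 2^(t+1) * ∑ j₀ : Fin 7, ∑ c, (G j₀ c)^2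
        = ∑ j₀ : Fin 7, 2 * (2^t * ∑ c, (G j₀ c)^2) := by
          rw [Finset.mul_sum]; exact Finset.sum_congr rfl fun _ _ => by ring
      _ ≤ ∑ j₀ : Fin 7, 2 * ∑ r, (H r j₀)^2 := by
          refine Finset.sum_le_sum (fun j₀ _ => ?_)
          have := step2 j₀; linarith
      _ = ∑ r, 2 * ∑ j₀ : Fin 7, (H r j₀)^2 := by
          simp only [Finset.mul_sum]
          exact Finset.sum_comm

lemma primes_card_lb {m : ℕ} (hm : 3 ≤ m) :
    m ≤ ((Finset.range (2*m^4+1)).filter Nat.Prime).card := by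
  set n := m^4 with hn
  have hn0 : 0 < n := by positivity
  set P := (Finset.range (2*n+1)).filter Nat.Prime with hP
  by_contra hlt
  push_neg at hlt
  -- centralBinom n ≤ (2n)^P.card
  have hcb0 : n.centralBinom ≠ 0 := (Nat.centralBinom_pos n).ne'
  have hsub : (n.centralBinom).primeFactors ⊆ P := by
    intro p hp
    have hpp : p.Prime := Nat.prime_of_mem_primeFactors hp
    have hdvd : p ∣ n.centralBinom := Nat.dvd_of_mem_primeFactors hp
    have hν : (n.centralBinom).factorization p ≠ 0 :=
      (hpp.factorization_pos_of_dvd hcb0 hdvd).ne'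
    have hple : p ^ (n.centralBinom).factorization p ≤ 2*n := by
      have := Nat.pow_factorization_choose_le (p := p) (n := 2*n) (k := n) (by omega)
      simpa [Nat.centralBinom] using this
    have : p ≤ 2*n := le_trans (Nat.le_self_pow hν p) hple
    simp only [hP, Finset.mem_filter, Finset.mem_range]
    exact ⟨by omega, hpp⟩
  have hcb_le : n.centralBinom ≤ (2*n) ^ P.card := by
    calc n.centralBinom
        = ∏ p ∈ (n.centralBinom).primeFactors, p ^ (n.centralBinom).factorization p := by
          conv_lhs => rw [← Nat.factorization_prod_pow_eq_self hcb0]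
          rw [Finsupp.prod, Nat.support_factorization]
      _ ≤ ∏ _p ∈ (n.centralBinom).primeFactors, (2*n) := by
          refine Finset.prod_le_prod' ?_
          intro p hp
          have := Nat.pow_factorization_choose_le (p := p) (n := 2*n) (k := n) (by omega)
          simpa [Nat.centralBinom] using this
      _ = (2*n) ^ (n.centralBinom).primeFactors.card := Finset.prod_const _
      _ ≤ (2*n) ^ P.card := Nat.pow_le_pow_right (by omega) (Finset.card_le_card hsub)
  have h4 : 4^n ≤ (2*n)^(P.card + 1) := by
    calc 4^n ≤ 2*n*n.centralBinom := Nat.four_pow_le_two_mul_self_mul_centralBinom n hn0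
      _ ≤ 2*n*(2*n)^P.card := Nat.mul_le_mul_left _ hcb_le
      _ = (2*n)^(P.card+1) := by ring
  have hcard : P.card + 1 ≤ m := by omega
  have h2n : 2*n < 2^(4*m+1) := by
    have : m < 2^m := Nat.lt_two_pow_self (n := m)
    have h4m : m^4 < 2^(4*m) := by
      calc m^4 < (2^m)^4 := by exact Nat.pow_lt_pow_left this (by norm_num)
        _ = 2^(4*m) := by rw [← pow_mul, Nat.mul_comm]
    calc 2*n = 2*m^4 := rfl
      _ < 2*2^(4*m) := by omega
      _ = 2^(4*m+1) := by ring
  have hfinal : 2^(2*n) < 2^((4*m+1)*m) := by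
    calc 2^(2*n) = 4^n := by rw [show (4:ℕ) = 2^2 from rfl, ← pow_mul]
      _ ≤ (2*n)^(P.card+1) := h4
      _ ≤ (2*n)^m := Nat.pow_le_pow_right (by omega) hcard
      _ < (2^(4*m+1))^m := Nat.pow_lt_pow_left h2n (by omega)
      _ = 2^((4*m+1)*m) := by rw [← pow_mul]
  have : 2*n < (4*m+1)*m := by
    have := (Nat.pow_lt_pow_iff_right (a := 2) (by norm_num)).mp hfinal
    omega
  rw [hn] at this
  have h3 : 9 ≤ m^2 := by nlinarith
  have h9 : 9*m^2 ≤ m^4 := by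
    calc 9*m^2 ≤ m^2*m^2 := Nat.mul_le_mul_right _ h3
      _ = m^4 := by ring
  have h10 : m ≤ m^2 := by nlinarith
  linarith

lemma exists_primes (m : ℕ) (hm : 3 ≤ m) :
    ∃ p : Fin m → ℕ, Function.Injective p ∧
      ∀ i, (p i).Prime ∧ p i ≤ 2*m^4 := by
  obtain ⟨T, hT, hTcard⟩ := Finset.exists_subset_card_eq (primes_card_lb hm)
  let e := T.orderIsoOfFin hTcard
  refine ⟨fun i => (e i : ℕ), ?_, ?_⟩
  · intro i j h
    exact e.injective (Subtype.ext h)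
  · intro i
    have := hT (e i).2
    simp only [Finset.mem_filter, Finset.mem_range] at this
    refine ⟨this.2, ?_⟩
    dsimp only
    omega


lemma sf_prod {α : Type*} (s : Finset α) (p : α → ℕ) (hp : ∀ x ∈ s, (p x).Prime)
    (hinj : Set.InjOn p s) : Squarefree (∏ x ∈ s, p x) := by
  classical
  induction s using Finset.induction_on with
  | empty => simpa using squarefree_one
  | @insert a s ha ih =>
    rw [Finset.prod_insert ha]
    have hpa : (p a).Prime := hp a (Finset.mem_insert_self a s)
    have hcop : (p a).Coprime (∏ x ∈ s, p x) := by
      refine Nat.Coprime.prod_right (fun y hy => ?_)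
      refine (Nat.coprime_primes hpa (hp y (Finset.mem_insert_of_mem hy))).mpr ?_
      intro he
      exact ha (by
        have := hinj (Finset.mem_insert_self a s) (Finset.mem_insert_of_mem hy) he
        rwa [this])
    rw [Nat.squarefree_mul hcop]
    exact ⟨hpa.squarefree,
      ih (fun x hx => hp x (Finset.mem_insert_of_mem hx))
        (hinj.mono (fun x hx => Finset.mem_insert_of_mem hx))⟩

lemma construction (t : ℕ) (ht : 1 ≤ t) :
    ∃ W : Finset ℕ,
      (∀ w ∈ W, w ∈ Finset.Icc 1 ((2*(t*7)^4)^(t*7)) ∧ Squarefree w) ∧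
      ∀ f : ℕ → ℝ, (∀ w ∈ W, f w = 1 ∨ f w = -1) →
        ∃ a : ℕ, 0 < a ∧
          Real.sqrt (2^t) ≤ |∑ w ∈ W.filter (fun w => a ∣ w), f w| := by
  classical
  set m := t*7 with hm
  have hm3 : 3 ≤ m := by omega
  obtain ⟨q, hqinj, hq⟩ := exists_primes m hm3
  set prm : Fin t × Fin 7 → ℕ := fun x => q (finProdFinEquiv x) with hprm
  have hprm_inj : Function.Injective prm := fun x y h => by
    have := hqinj h
    exact finProdFinEquiv.injective this
  have hprm_prime : ∀ x, (prm x).Prime := fun x => (hq _).1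
  have hprm_le : ∀ x, prm x ≤ 2*m^4 := fun x => (hq _).2
  set b : (Fin t → Fin 7) → ℕ :=
    fun c => ∏ x : Fin t × Fin 7, (if M x.2 (c x.1) = 1 then prm x else 1) with hb
  -- key divisibility lemma
  have KD : ∀ (j : Fin t) (i : Fin 7) (c : Fin t → Fin 7),
      prm (j, i) ∣ b c ↔ M i (c j) = 1 := by
    intro j i c
    constructor
    · intro h
      obtain ⟨x, -, hx⟩ := (Prime.dvd_finset_prod_iff ((hprm_prime (j,i)).prime) _).mp h
      by_cases hMx : M x.2 (c x.1) = 1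
      · rw [if_pos hMx] at hx
        have hxe : (j, i) = x :=
          hprm_inj ((Nat.prime_dvd_prime_iff_eq (hprm_prime _) (hprm_prime _)).mp hx)
        rw [← hxe] at hMx
        exact hMx
      · rw [if_neg hMx] at hx
        exact absurd (Nat.dvd_one.mp hx) (hprm_prime (j,i)).ne_one
    · intro hM
      have h2 : (if M i (c j) = 1 then prm (j, i) else 1) ∣ b c :=
        Finset.dvd_prod_of_mem _ (Finset.mem_univ (j, i))
      rwa [if_pos hM] at h2
  have hbpos : ∀ c, 0 < b c := by
    intro c
    refine Finset.prod_pos (fun x _ => ?_)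
    split
    · exact (hprm_prime x).pos
    · norm_num
  have hble : ∀ c, b c ≤ (2*m^4)^m := by
    intro c
    have hdvd : b c ∣ ∏ x : Fin t × Fin 7, prm x := by
      refine Finset.prod_dvd_prod_of_dvd _ _ (fun x _ => ?_)
      split
      · exact dvd_refl _
      · exact one_dvd _
    have h1 : b c ≤ ∏ x : Fin t × Fin 7, prm x :=
      Nat.le_of_dvd (Finset.prod_pos (fun x _ => (hprm_prime x).pos)) hdvd
    have h2 : (∏ x : Fin t × Fin 7, prm x) ≤ (2*m^4)^m := by
      calc (∏ x : Fin t × Fin 7, prm x) ≤ ∏ _x : Fin t × Fin 7, (2*m^4) :=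
            Finset.prod_le_prod' (fun x _ => hprm_le x)
        _ = (2*m^4)^m := by
            rw [Finset.prod_const, Finset.card_univ]
            congr 1
            simp [hm]
    omega
  have hbsf : ∀ c, Squarefree (b c) := by
    intro c
    have : b c = ∏ x ∈ Finset.univ.filter (fun x : Fin t × Fin 7 => M x.2 (c x.1) = 1), prm x := by
      rw [Finset.prod_filter]
    rw [this]
    exact sf_prod _ _ (fun x _ => hprm_prime x) hprm_inj.injOn
  have hbinj : Function.Injective b := by
    intro c c' h
    funext j
    refine M_cols_distinct _ _ (fun i => ?_)
    have hiff : M i (c j) = 1 ↔ M i (c' j) = 1 := by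
      rw [← KD j i c, ← KD j i c', h]
    rcases M_zero_or_one i (c j) with h1|h1 <;> rcases M_zero_or_one i (c' j) with h2|h2
    · rw [h1, h2]
    · exact absurd (hiff.mpr h2) (by rw [h1]; norm_num)
    · exact absurd (hiff.mp h1) (by rw [h2]; norm_num)
    · rw [h1, h2]
  set aa : (Fin t → Fin 7) → ℕ := fun r => ∏ j, prm (j, r j) with haa
  have haapos : ∀ r, 0 < aa r := fun r => Finset.prod_pos (fun j _ => (hprm_prime _).pos)
  have RD : ∀ (r c : Fin t → Fin 7), aa r ∣ b c ↔ ∀ j, M (r j) (c j) = 1 := by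
    intro r c
    constructor
    · intro h j
      have h1 : prm (j, r j) ∣ aa r := Finset.dvd_prod_of_mem _ (Finset.mem_univ j)
      exact (KD j (r j) c).mp (h1.trans h)
    · intro h
      have hinj2 : Function.Injective (fun j : Fin t => prm (j, r j)) := by
        intro j j' he
        have := hprm_inj he
        exact congrArg Prod.fst this
      have him : aa r = ∏ p ∈ Finset.univ.image (fun j : Fin t => prm (j, r j)), p := by
        rw [Finset.prod_image (fun x _ y _ h => hinj2 h)]
      rw [him]
      refine Finset.prod_primes_dvd _ ?_ ?_
      · intro p hp
        obtain ⟨j, -, rfl⟩ := Finset.mem_image.mp hp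
        exact (hprm_prime _).prime
      · intro p hp
        obtain ⟨j, -, rfl⟩ := Finset.mem_image.mp hp
        exact (KD j (r j) c).mpr (h j)
  set W : Finset ℕ := Finset.image b Finset.univ with hW
  refine ⟨W, ?_, ?_⟩
  · intro w hw
    obtain ⟨c, -, rfl⟩ := Finset.mem_image.mp hw
    exact ⟨Finset.mem_Icc.mpr ⟨hbpos c, hble c⟩, hbsf c⟩
  · intro f hf
    set g : (Fin t → Fin 7) → ℝ := fun c => f (b c) with hg
    have hg1 : ∀ c, (g c)^2 = 1 := by
      intro c
      rcases hf (b c) (Finset.mem_image_of_mem b (Finset.mem_univ c)) with h|h <;>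
        rw [hg] <;> simp [h]
    -- sum identity
    have hsumid : ∀ r : Fin t → Fin 7,
        ∑ w ∈ W.filter (fun w => aa r ∣ w), f w = ∑ c, A t r c * g c := by
      intro r
      have h1 : W.filter (fun w => aa r ∣ w)
          = (Finset.univ.filter (fun c => aa r ∣ b c)).image b := by
        rw [hW, Finset.filter_image]
      rw [h1, Finset.sum_image (fun x _ y _ h => hbinj h), Finset.sum_filter]
      refine Finset.sum_congr rfl (fun c _ => ?_)
      by_cases hc : ∀ j, M (r j) (c j) = 1
      · rw [if_pos ((RD r c).mpr hc)]
        have hA1 : A t r c = 1 := by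
          rw [A]
          refine Finset.prod_eq_one (fun j _ => ?_)
          rw [hc j]
          norm_num
        rw [hA1, one_mul]
      · rw [if_neg (fun hd => hc ((RD r c).mp hd))]
        push_neg at hc
        obtain ⟨j₀, hj₀⟩ := hc
        have hA0 : A t r c = 0 := by
          rw [A]
          refine Finset.prod_eq_zero (Finset.mem_univ j₀) ?_
          rcases M_zero_or_one (r j₀) (c j₀) with h0|h1
          · rw [h0]; norm_num
          · exact absurd h1 hj₀
        rw [hA0, zero_mul]
    -- spectral bound
    have hsum2 : (2:ℝ)^t * ∑ c, (g c)^2 ≤ ∑ r, (∑ c, A t r c * g c)^2 := tensor_ineq t g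
    have hcardfun : ∑ c : Fin t → Fin 7, (g c)^2 = (Fintype.card (Fin t → Fin 7) : ℝ) := by
      rw [Finset.sum_congr rfl (fun c _ => hg1 c), Finset.sum_const, Finset.card_univ]
      simp
    have hex : ∃ r : Fin t → Fin 7, (2:ℝ)^t ≤ (∑ c, A t r c * g c)^2 := by
      have hne : (Finset.univ : Finset (Fin t → Fin 7)).Nonempty := Finset.univ_nonempty
      have hsc : ∑ _r : Fin t → Fin 7, (2:ℝ)^t
          = (Fintype.card (Fin t → Fin 7) : ℝ) * 2^t := by
        rw [Finset.sum_const, Finset.card_univ, nsmul_eq_mul]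
      have : ∑ _r : Fin t → Fin 7, (2:ℝ)^t ≤ ∑ r, (∑ c, A t r c * g c)^2 := by
        rw [hsc]
        calc (Fintype.card (Fin t → Fin 7) : ℝ) * 2^t
            = 2^t * ∑ c, (g c)^2 := by rw [hcardfun]; ring
          _ ≤ _ := hsum2
      obtain ⟨r, -, hr⟩ := Finset.exists_le_of_sum_le hne this
      exact ⟨r, hr⟩
    obtain ⟨r, hr⟩ := hex
    refine ⟨aa r, haapos r, ?_⟩
    rw [hsumid r]
    calc Real.sqrt (2^t) ≤ Real.sqrt ((∑ c, A t r c * g c)^2) := Real.sqrt_le_sqrt hr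
      _ = |∑ c, A t r c * g c| := Real.sqrt_sq_eq_abs _

end HAPaux

/-- There exist a constant `c > 0` and infinitely many positive
integers `n` such that there is a set `Wₙ ⊆ {1, …, n}` of squarefree positive
integers so that for every `f : Wₙ → {-1, +1}` there is a positive integer `a`
with `|∑_{b ∈ Wₙ, a ∣ b} f(b)| ≥ n^{c / log log n}`. -/
theorem hereditary_discrepancy_HAP_lower_bound :
    ∃ c : ℝ, 0 < c ∧ ∀ N : ℕ, ∃ n : ℕ, N ≤ n ∧ 0 < n ∧
      ∃ W : Finset ℕ, (∀ b ∈ W, b ∈ Finset.Icc 1 n ∧ Squarefree b) ∧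
        ∀ f : ℕ → ℝ, (∀ b ∈ W, f b = 1 ∨ f b = -1) →
          ∃ a : ℕ, 0 < a ∧
            (n : ℝ) ^ (c / Real.log (Real.log n)) ≤
              |∑ b ∈ W.filter (fun b => a ∣ b), f b| := by
  refine ⟨Real.log 2 / 120, by positivity, ?_⟩
  intro N
  set t := max N 1 with hts
  have ht : 1 ≤ t := le_max_right N 1
  set m := t*7 with hms
  have hm7 : 7 ≤ m := by omega
  set n := (2*m^4)^m with hns
  have hn_lb : m < n := by
    calc m < 2^m := Nat.lt_two_pow_self (n := m)
      _ ≤ (2*m^4)^m := Nat.pow_le_pow_left (by nlinarith [Nat.one_le_pow 4 m (by omega : 0 < m)]) m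
  have hNn : N ≤ n := by
    have : N ≤ t := le_max_left N 1
    omega
  have hn0 : 0 < n := by positivity
  obtain ⟨W, hW1, hW2⟩ := HAPaux.construction t ht
  refine ⟨n, hNn, hn0, W, hW1, ?_⟩
  intro f hf
  obtain ⟨a, ha, hbound⟩ := hW2 f hf
  refine ⟨a, ha, le_trans ?_ hbound⟩
  -- analytic estimate : (n:ℝ)^(c/L) ≤ sqrt (2^t)
  set L := Real.log (Real.log n) with hL
  have hmR : ((m:ℕ):ℝ) = 7*(t:ℝ) := by push_cast [hms]; ring
  have hnR : ((n:ℕ):ℝ) = (2*(m:ℝ)^4)^(m:ℕ) := by push_cast [hns]; ring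
  have hXpos : (0:ℝ) < 2*(m:ℝ)^4 := by positivity
  have hlogn : Real.log n = (m:ℝ) * Real.log (2*(m:ℝ)^4) := by
    rw [hnR, Real.log_pow]
  have hX1 : (1:ℝ) ≤ Real.log (2*(m:ℝ)^4) := by
    rw [Real.le_log_iff_exp_le hXpos]
    have h1 : Real.exp 1 < 2.7182818286 := Real.exp_one_lt_d9
    have h2 : (2.7182818286:ℝ) ≤ 2*(m:ℝ)^4 := by
      have h7 : (7:ℝ) ≤ (m:ℝ) := by exact_mod_cast hm7
      nlinarith [pow_le_pow_left₀ (by norm_num : (0:ℝ) ≤ 7) h7 4]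
    linarith
  have hlogn_ge : (m:ℝ) ≤ Real.log n := by
    rw [hlogn]
    have h0 : (0:ℝ) ≤ (m:ℝ) := by positivity
    nlinarith [mul_le_mul_of_nonneg_left hX1 h0]
  have hm1 : (1:ℝ) < (m:ℝ) := by exact_mod_cast (by omega : 1 < m)
  have hlogm_pos : 0 < Real.log m := Real.log_pos hm1
  have hLge : Real.log (m:ℝ) ≤ L := by
    rw [hL]
    exact Real.log_le_log (by positivity) hlogn_ge
  have hLpos : 0 < L := lt_of_lt_of_le hlogm_pos hLge
  have hlog2pos : 0 < Real.log 2 := Real.log_pos (by norm_num)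
  have hXle : Real.log (2*(m:ℝ)^4) ≤ 5 * Real.log m := by
    have h25 : 2*(m:ℝ)^4 ≤ (m:ℝ)^5 := by
      have h7 : (7:ℝ) ≤ (m:ℝ) := by exact_mod_cast hm7
      have h4 : (0:ℝ) ≤ (m:ℝ)^4 := by positivity
      nlinarith [mul_le_mul_of_nonneg_right h7 h4]
    calc Real.log (2*(m:ℝ)^4) ≤ Real.log ((m:ℝ)^5) := Real.log_le_log hXpos h25
      _ = 5 * Real.log m := by rw [Real.log_pow]; push_cast; ring
  have key : (Real.log 2 / 120) * Real.log n ≤ ((t:ℝ)/2) * Real.log 2 * L := by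
    have hXL : Real.log (2*(m:ℝ)^4) ≤ 5 * L := le_trans hXle (by linarith)
    have htpos : (0:ℝ) < (t:ℝ) := by exact_mod_cast ht
    calc (Real.log 2 / 120) * Real.log n
        = (Real.log 2 / 120) * ((m:ℝ) * Real.log (2*(m:ℝ)^4)) := by rw [hlogn]
      _ ≤ (Real.log 2 / 120) * ((m:ℝ) * (5*L)) := by
          have hm0 : (0:ℝ) ≤ (m:ℝ) := by positivity
          have := mul_le_mul_of_nonneg_left hXL hm0
          have h120 : (0:ℝ) ≤ Real.log 2 / 120 := by positivity
          exact mul_le_mul_of_nonneg_left this h120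
      _ = (35/120) * ((t:ℝ) * (Real.log 2 * L)) := by rw [hmR]; ring
      _ ≤ (1/2) * ((t:ℝ) * (Real.log 2 * L)) := by
          have : (0:ℝ) ≤ (t:ℝ) * (Real.log 2 * L) := by positivity
          nlinarith
      _ = ((t:ℝ)/2) * Real.log 2 * L := by ring
  -- conclude
  have h2t : ((2:ℝ)^t) = Real.exp ((t:ℝ) * Real.log 2) := by
    rw [← Real.log_pow, Real.exp_log (by positivity)]
  have hnpos : (0:ℝ) < (n:ℝ) := by exact_mod_cast hn0
  rw [Real.rpow_def_of_pos hnpos]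
  rw [Real.le_sqrt (Real.exp_nonneg _) (by positivity)]
  have hsq : Real.exp (Real.log n * (Real.log 2 / 120 / L)) ^ 2
      = Real.exp (2 * (Real.log n * (Real.log 2 / 120 / L))) := by
    rw [sq, ← Real.exp_add]; ring_nf
  rw [hsq, h2t, Real.exp_le_exp]
  rw [div_div] at *
  have : Real.log n * (Real.log 2 / (120 * L)) = (Real.log 2 / 120) * Real.log n / L := by
    ring
  rw [this]
  rw [mul_div_assoc']
  rw [div_le_iff₀ hLpos]
  calc 2 * ((Real.log 2 / 120) * Real.log n)
      ≤ 2 * (((t:ℝ)/2) * Real.log 2 * L) := by linarith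
    _ = (t:ℝ) * Real.log 2 * L := by ring
end

section
/- For any real m × n matrix A, the hereditary discrepancy of A satisfies herdisc(A) ≥ (1/2) · max_k max_B |det(B)|^{1/k}, where for each k the matrix B ranges over all k × k submatrices of A. -/
/-- The discrepancy of a real matrix `A`:
`disc(A) = min_{x ∈ {-1,+1}^n} ‖Ax‖_∞`. -/
noncomputable def matDisc {m n : Type*} [Fintype m] [Fintype n]
    (A : Matrix m n ℝ) : ℝ :=
  sInf {D : ℝ | ∃ x : n → ℝ, (∀ i, x i = 1 ∨ x i = -1) ∧
    D = ⨆ j : m, |∑ i, A j i * x i|}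

/-- The hereditary discrepancy of a real matrix `A`:
`herdisc(A) = max_{W ⊆ columns} disc(A|_W)`, where `A|_W` is the submatrix of
columns indexed by `W`. -/
noncomputable def matHerDisc {m n : Type*} [Fintype m] [Fintype n]
    (A : Matrix m n ℝ) : ℝ :=
  sSup {D : ℝ | ∃ W : Finset n,
    D = matDisc (A.submatrix id (fun i : {x // x ∈ W} => i.1))}

section basic
set_option linter.unusedSectionVars false
variable {m n : Type*} [Fintype m] [Fintype n] (A : Matrix m n ℝ)

lemma discSet_eq_range :
    {D : ℝ | ∃ x : n → ℝ, (∀ i, x i = 1 ∨ x i = -1) ∧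
      D = ⨆ j : m, |∑ i, A j i * x i|} =
    Set.range (fun b : n → Bool =>
      ⨆ j : m, |∑ i, A j i * (if b i then 1 else (-1:ℝ))|) := by
  ext D
  constructor
  · rintro ⟨x, hx, rfl⟩
    classical
    refine ⟨fun i => decide (x i = 1), ?_⟩
    refine congrArg _ (funext fun j => congrArg _ (Finset.sum_congr rfl fun i _ => ?_))
    rcases hx i with h | h
    · simp [h]
    · simp only [h]
      norm_num
  · rintro ⟨b, rfl⟩
    exact ⟨fun i => if b i then 1 else -1, fun i => by by_cases h : b i <;> simp [h], rfl⟩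

lemma discSet_nonempty :
    {D : ℝ | ∃ x : n → ℝ, (∀ i, x i = 1 ∨ x i = -1) ∧
      D = ⨆ j : m, |∑ i, A j i * x i|}.Nonempty :=
  ⟨_, Set.mem_setOf.mpr ⟨fun _ => 1, fun _ => Or.inl rfl, rfl⟩⟩

lemma discSet_finite :
    {D : ℝ | ∃ x : n → ℝ, (∀ i, x i = 1 ∨ x i = -1) ∧
      D = ⨆ j : m, |∑ i, A j i * x i|}.Finite := by
  rw [discSet_eq_range]; exact Set.finite_range _

lemma matDisc_mem : matDisc A ∈ {D : ℝ | ∃ x : n → ℝ, (∀ i, x i = 1 ∨ x i = -1) ∧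
    D = ⨆ j : m, |∑ i, A j i * x i|} :=
  (discSet_nonempty A).csInf_mem (discSet_finite A)

lemma matDisc_nonneg : 0 ≤ matDisc A := by
  obtain ⟨x, -, h⟩ := matDisc_mem A
  rw [h]
  exact Real.iSup_nonneg fun j => abs_nonneg _

lemma matDisc_le_matHerDisc (W : Finset n) :
    matDisc (A.submatrix id (fun i : {x // x ∈ W} => i.1)) ≤ matHerDisc A := by
  apply le_csSup
  · apply Set.Finite.bddAbove
    have : {D : ℝ | ∃ W : Finset n,
        D = matDisc (A.submatrix id (fun i : {x // x ∈ W} => i.1))} =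
        Set.range (fun W : Finset n =>
          matDisc (A.submatrix id (fun i : {x // x ∈ W} => i.1))) := by
      ext D; simp [eq_comm, Set.range]
    rw [this]; exact Set.finite_range _
  · exact ⟨W, rfl⟩

lemma matHerDisc_nonneg : 0 ≤ matHerDisc A :=
  le_trans (matDisc_nonneg _) (matDisc_le_matHerDisc A ∅)

/-- key: for every column subset there is a sign vector whose every row sum is ≤ herdisc -/
lemma exists_signs (W : Finset n) :
    ∃ χ : {x // x ∈ W} → ℝ, (∀ i, χ i = 1 ∨ χ i = -1) ∧
      ∀ j : m, |∑ i : {x // x ∈ W}, A j i.1 * χ i| ≤ matHerDisc A := by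
  obtain ⟨χ, hχ, h⟩ := matDisc_mem (A.submatrix id (fun i : {x // x ∈ W} => i.1))
  refine ⟨χ, hχ, fun j => ?_⟩
  have h' : matDisc (A.submatrix id (fun i : {x // x ∈ W} => i.1)) =
      ⨆ j : m, |∑ i : {x // x ∈ W}, A j i.1 * χ i| := h
  calc |∑ i : {x // x ∈ W}, A j i.1 * χ i|
      ≤ ⨆ j : m, |∑ i : {x // x ∈ W}, A j i.1 * χ i| :=
        le_ciSup (f := fun j : m => |∑ i : {x // x ∈ W}, A j i.1 * χ i|) (Finite.bddAbove_range _) j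
    _ = matDisc (A.submatrix id (fun i : {x // x ∈ W} => i.1)) := h'.symm
    _ ≤ matHerDisc A := matDisc_le_matHerDisc A W

end basic

section round
set_option linter.unusedSectionVars false
set_option maxHeartbeats 1000000
variable {m n k : ℕ} (A : Matrix (Fin m) (Fin n) ℝ) (c : Fin k → Fin n)

lemma rounding (hc : Function.Injective c) : ∀ t : ℕ, ∀ x : Fin k → ℝ,
    (∀ i, 0 ≤ x i ∧ x i ≤ 1) → (∀ i, ∃ a : ℤ, x i = a / 2 ^ t) →
    ∃ z : Fin k → ℝ, (∀ i, z i = 0 ∨ z i = 1) ∧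
      ∀ q : Fin m, |∑ i, A q (c i) * (x i - z i)| ≤ (1 - (2:ℝ)⁻¹ ^ t) * matHerDisc A := by
  intro t
  induction t with
  | zero =>
    intro x hx hd
    refine ⟨x, fun i => ?_, fun q => by simp⟩
    obtain ⟨a, ha⟩ := hd i
    simp only [pow_zero, div_one] at ha
    have h1 : (0:ℤ) ≤ a := by exact_mod_cast ha ▸ (hx i).1
    have h2 : a ≤ 1 := by exact_mod_cast ha ▸ (hx i).2
    interval_cases a
    · left; rw [ha]; norm_num
    · right; rw [ha]; norm_num
  | succ t ih =>
    intro x hx hd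
    choose a ha using hd
    classical
    set S : Finset (Fin k) := Finset.univ.filter (fun i => Odd (a i)) with hS
    set W : Finset (Fin n) := S.image c with hW
    obtain ⟨χ, hχ1, hχ2⟩ := exists_signs A W
    set ψ : Fin n → ℝ := fun w => if h : w ∈ W then χ ⟨w, h⟩ else 0 with hψ
    have hψpm : ∀ i ∈ S, ψ (c i) = 1 ∨ ψ (c i) = -1 := by
      intro i hi
      rw [hψ]
      simp only [dif_pos (show c i ∈ W from Finset.mem_image_of_mem c hi)]
      exact hχ1 _
    set x' : Fin k → ℝ := fun i => x i + (2:ℝ)⁻¹ ^ (t+1) * (if i ∈ S then ψ (c i) else 0)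
      with hx'
    -- bounds on a i
    have hab : ∀ i, (0:ℤ) ≤ a i ∧ a i ≤ 2 ^ (t+1) := by
      intro i
      have h1 := (hx i).1
      have h2 := (hx i).2
      rw [ha i, le_div_iff₀ (by positivity)] at h1
      rw [ha i, div_le_one (by positivity)] at h2
      constructor
      · exact_mod_cast (by linarith : (0:ℝ) ≤ (a i : ℝ))
      · exact_mod_cast (by push_cast; linarith : (a i : ℝ) ≤ ((2:ℤ)^(t+1) : ℤ))
    -- x' is in [0,1] and has precision t
    have key : ∀ i, (0 ≤ x' i ∧ x' i ≤ 1) ∧ ∃ b : ℤ, x' i = b / 2 ^ t := by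
      intro i
      by_cases hi : i ∈ S
      · obtain ⟨b, hb⟩ : Odd (a i) := by
          rw [hS] at hi; exact (Finset.mem_filter.mp hi).2
        have hb0 : 0 ≤ b := by have := (hab i).1; omega
        have hb1 : b ≤ 2 ^ t - 1 := by
          have := (hab i).2
          have : 2 * b + 1 ≤ 2 ^ (t+1) := by omega
          have h2 : (2:ℤ) ^ (t+1) = 2 * 2 ^ t := by ring
          omega
        rcases hψpm i hi with hp | hp
        · have hx'i : x' i = ((b+1 : ℤ) : ℝ) / 2 ^ t := by
            rw [hx']
            simp only [if_pos hi, hp, mul_one, ha i, hb]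
            push_cast
            simp only [inv_pow]
            field_simp
            ring
          refine ⟨⟨?_, ?_⟩, ⟨b+1, hx'i⟩⟩
          · rw [hx'i]; positivity
          · rw [hx'i, div_le_one (by positivity)]
            have hle : (b+1 : ℤ) ≤ 2 ^ t := by omega
            exact_mod_cast hle
        · have hx'i : x' i = ((b : ℤ) : ℝ) / 2 ^ t := by
            rw [hx']
            simp only [if_pos hi, hp, ha i, hb]
            push_cast
            simp only [inv_pow]
            field_simp
            ring
          refine ⟨⟨?_, ?_⟩, ⟨b, hx'i⟩⟩
          · rw [hx'i]
            have : (0:ℝ) ≤ ((b:ℤ):ℝ) := by exact_mod_cast hb0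
            positivity
          · rw [hx'i, div_le_one (by positivity)]
            have hle : (b : ℤ) ≤ 2 ^ t := by omega
            exact_mod_cast hle
      · have heven : Even (a i) := by
          rw [hS] at hi
          simp only [Finset.mem_filter, Finset.mem_univ, true_and] at hi
          exact Int.not_odd_iff_even.mp hi
        obtain ⟨b, hb⟩ := heven
        have hx'i : x' i = x i := by rw [hx']; simp [if_neg hi]
        have hpr : x' i = ((b:ℤ):ℝ) / 2 ^ t := by
          rw [hx'i, ha i, hb]
          push_cast
          field_simp
          ring
        exact ⟨⟨hx'i ▸ (hx i).1, hx'i ▸ (hx i).2⟩, ⟨b, hpr⟩⟩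
    obtain ⟨z, hz, hbound⟩ := ih x' (fun i => (key i).1) (fun i => (key i).2)
    refine ⟨z, hz, fun q => ?_⟩
    have hsplit : ∑ i, A q (c i) * (x i - z i)
        = (∑ i, A q (c i) * (x i - x' i)) + ∑ i, A q (c i) * (x' i - z i) := by
      rw [← Finset.sum_add_distrib]
      exact Finset.sum_congr rfl fun i _ => by ring
    have hfirst : ∑ i, A q (c i) * (x i - x' i)
        = -((2:ℝ)⁻¹ ^ (t+1)) * ∑ j : {v // v ∈ W}, A q j.1 * χ j := by
      have e1 : ∀ i, A q (c i) * (x i - x' i)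
          = -((2:ℝ)⁻¹ ^ (t+1)) * (if i ∈ S then A q (c i) * ψ (c i) else 0) := by
        intro i
        rw [hx']
        by_cases hi : i ∈ S <;> simp [hi] <;> ring
      rw [Finset.sum_congr rfl fun i _ => e1 i, ← Finset.mul_sum]
      congr 1
      rw [Finset.sum_ite_mem, Finset.univ_inter]
      have himg : ∑ w ∈ W, A q w * ψ w = ∑ i ∈ S, A q (c i) * ψ (c i) := by
        rw [hW]
        exact Finset.sum_image (fun i _ j _ h => hc h)
      rw [← himg, ← Finset.sum_coe_sort W (fun w => A q w * ψ w)]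
      refine Finset.sum_congr rfl fun j _ => ?_
      rw [hψ]
      simp only [dif_pos j.2]
    calc |∑ i, A q (c i) * (x i - z i)|
        ≤ |∑ i, A q (c i) * (x i - x' i)| + |∑ i, A q (c i) * (x' i - z i)| := by
          rw [hsplit]; exact abs_add_le _ _
      _ ≤ (2:ℝ)⁻¹ ^ (t+1) * matHerDisc A + (1 - (2:ℝ)⁻¹ ^ t) * matHerDisc A := by
          gcongr ?_ + ?_
          · rw [hfirst, abs_mul, abs_neg, abs_of_nonneg (by positivity : (0:ℝ) ≤ (2:ℝ)⁻¹ ^ (t+1))]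
            exact mul_le_mul_of_nonneg_left (hχ2 q) (by positivity)
          · exact hbound q
      _ = (1 - (2:ℝ)⁻¹ ^ (t+1)) * matHerDisc A := by rw [pow_succ]; ring

end round

section realround
set_option linter.unusedSectionVars false
set_option maxHeartbeats 1000000
variable {m n k : ℕ} (A : Matrix (Fin m) (Fin n) ℝ) (c : Fin k → Fin n)

lemma rounding_real (hc : Function.Injective c) (x : Fin k → ℝ)
    (hx : ∀ i, 0 ≤ x i ∧ x i ≤ 1) :
    ∃ z : Fin k → ℝ, (∀ i, z i = 0 ∨ z i = 1) ∧
      ∀ q : Fin m, |∑ i, A q (c i) * (x i - z i)| ≤ matHerDisc A := by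
  classical
  set D := matHerDisc A with hD
  set C : Set (Fin k → ℝ) := ⋃ b : Fin k → Bool,
    {y | ∀ q : Fin m, |∑ i, A q (c i) * (y i - (if b i then 1 else 0))| ≤ D} with hC
  have hclosed : IsClosed C := by
    apply isClosed_iUnion_of_finite
    intro b
    have : {y : Fin k → ℝ | ∀ q : Fin m,
        |∑ i, A q (c i) * (y i - (if b i then 1 else 0))| ≤ D} =
        ⋂ q : Fin m, {y | |∑ i, A q (c i) * (y i - (if b i then 1 else 0))| ≤ D} := by
      ext y; simp [Set.mem_iInter]
    rw [this]
    refine isClosed_iInter fun q => ?_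
    apply isClosed_le _ continuous_const
    exact (continuous_finset_sum _ fun i _ =>
      (continuous_const.mul ((continuous_apply i).sub continuous_const))).abs
  set u : ℕ → Fin k → ℝ := fun t i => (⌊x i * 2 ^ t⌋ : ℝ) / 2 ^ t with hu
  have huIcc : ∀ t i, 0 ≤ u t i ∧ u t i ≤ 1 := by
    intro t i
    have h2 : (0:ℝ) < 2 ^ t := by positivity
    constructor
    · apply div_nonneg _ h2.le
      exact_mod_cast Int.floor_nonneg.mpr (mul_nonneg (hx i).1 (by positivity))
    · rw [div_le_one h2]
      calc ((⌊x i * 2 ^ t⌋ : ℤ) : ℝ) ≤ x i * 2 ^ t := Int.floor_le _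
        _ ≤ 1 * 2 ^ t := by have := (hx i).2; nlinarith
        _ = 2 ^ t := one_mul _
  have huC : ∀ t, u t ∈ C := by
    intro t
    obtain ⟨z, hz, hb⟩ := rounding A c hc t (u t) (huIcc t) (fun i => ⟨⌊x i * 2 ^ t⌋, rfl⟩)
    rw [hC, Set.mem_iUnion]
    refine ⟨fun i => if z i = 1 then true else false, fun q => ?_⟩
    have hzz : ∀ i, (if (if z i = 1 then true else false) then (1:ℝ) else 0) = z i := by
      intro i
      rcases hz i with h | h <;> simp [h]
    calc |∑ i, A q (c i) * (u t i - (if (if z i = 1 then true else false) then (1:ℝ) else 0))|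
        = |∑ i, A q (c i) * (u t i - z i)| := by
          congr 1; exact Finset.sum_congr rfl fun i _ => by rw [hzz i]
      _ ≤ (1 - (2:ℝ)⁻¹ ^ t) * D := hb q
      _ ≤ 1 * D := by
          apply mul_le_mul_of_nonneg_right _ (matHerDisc_nonneg A)
          have : (0:ℝ) ≤ (2:ℝ)⁻¹ ^ t := by positivity
          linarith
      _ = D := one_mul _
  have htend : Filter.Tendsto u Filter.atTop (nhds x) := by
    rw [tendsto_pi_nhds]
    intro i
    have hup : ∀ t, u t i ≤ x i := by
      intro t
      have h2 : (0:ℝ) < 2 ^ t := by positivity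
      rw [hu]
      calc ((⌊x i * 2 ^ t⌋ : ℤ) : ℝ) / 2 ^ t ≤ (x i * 2 ^ t) / 2 ^ t := by
            gcongr; exact Int.floor_le _
        _ = x i := by field_simp
    have hlo : ∀ t, x i - (2:ℝ)⁻¹ ^ t ≤ u t i := by
      intro t
      have h2 : (0:ℝ) < 2 ^ t := by positivity
      have h1 : x i * 2 ^ t - 1 ≤ ((⌊x i * 2 ^ t⌋ : ℤ) : ℝ) := (Int.sub_one_lt_floor _).le
      rw [hu]
      have : (x i * 2 ^ t - 1) / 2 ^ t ≤ ((⌊x i * 2 ^ t⌋ : ℤ) : ℝ) / 2 ^ t := by gcongr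
      calc x i - (2:ℝ)⁻¹ ^ t = (x i * 2 ^ t - 1) / 2 ^ t := by
            rw [inv_pow]; field_simp
        _ ≤ _ := this
    have hlim : Filter.Tendsto (fun t : ℕ => x i - (2:ℝ)⁻¹ ^ t) Filter.atTop (nhds (x i)) := by
      have : Filter.Tendsto (fun t : ℕ => (2:ℝ)⁻¹ ^ t) Filter.atTop (nhds 0) :=
        tendsto_pow_atTop_nhds_zero_of_lt_one (by norm_num) (by norm_num)
      simpa using Filter.Tendsto.sub (tendsto_const_nhds (x := x i)) this
    exact tendsto_of_tendsto_of_tendsto_of_le_of_le hlim tendsto_const_nhds hlo hup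
  have hxC : x ∈ C := hclosed.mem_of_tendsto htend (Filter.Eventually.of_forall huC)
  rw [hC, Set.mem_iUnion] at hxC
  obtain ⟨b, hb⟩ := hxC
  exact ⟨fun i => if b i then 1 else 0, fun i => by by_cases h : b i <;> simp [h], hb⟩

end realround


open scoped Pointwise in
set_option maxHeartbeats 1000000 in
/-- determinant lower bound of Lovász–Spencer–Vesztergombi.
For any real `m × n` matrix `A`, `herdisc(A) ≥ (1/2) · max_k max_B |det B|^{1/k}`,
where `B` ranges over all `k × k` submatrices of `A` (given by injective row and
column selections `r`, `c`). -/
theorem determinant_lower_bound {m n : ℕ} (A : Matrix (Fin m) (Fin n) ℝ)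
    (k : ℕ) (hk : 0 < k) (r : Fin k → Fin m) (c : Fin k → Fin n)
    (hr : Function.Injective r) (hc : Function.Injective c) :
    (1 / 2 : ℝ) * |(A.submatrix r c).det| ^ ((1 : ℝ) / k) ≤ matHerDisc A := by
  classical
  set B := A.submatrix r c with hB
  set D := matHerDisc A with hD
  have hD0 : 0 ≤ D := matHerDisc_nonneg A
  rcases eq_or_ne B.det 0 with hdet | hdet
  · rw [hdet, abs_zero, Real.zero_rpow (by
      simp only [ne_eq, one_div, inv_eq_zero, Nat.cast_eq_zero]
      omega), mul_zero]
    exact hD0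
  -- invertible matrix, build the basis of columns
  have hinv : Invertible B := B.invertibleOfIsUnitDet (isUnit_iff_ne_zero.mpr hdet)
  set e : (Fin k → ℝ) ≃ₗ[ℝ] (Fin k → ℝ) := B.toLinearEquiv' hinv with he
  set bas : Module.Basis (Fin k) ℝ (Fin k → ℝ) := (Pi.basisFun ℝ (Fin k)).map e with hbas
  have heapp : ∀ v, e v = B.mulVec v := fun v => rfl
  have hbase : ∀ i, bas i = fun q => B q i := by
    intro i
    rw [hbas]
    simp only [Module.Basis.map_apply, Pi.basisFun_apply]
    funext q
    rw [heapp]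
    rw [Matrix.mulVec_single]
    simp
  set cube : Set (Fin k → ℝ) := Set.Icc (fun _ => -D) (fun _ => D) with hcube
  set L := (Submodule.span ℤ (Set.range (bas : Fin k → (Fin k → ℝ)))).toAddSubgroup with hL
  have hcnt : Countable L :=
    inferInstanceAs (Countable (Submodule.span ℤ (Set.range (bas : Fin k → (Fin k → ℝ)))))
  -- covering
  have hcover : (⋃ g : L, g +ᵥ cube) = Set.univ := by
    rw [Set.eq_univ_iff_forall]
    intro y
    rw [Set.mem_iUnion]
    set xv := e.symm y with hxv
    set f : Fin k → ℝ := fun i => Int.fract (xv i) with hf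
    obtain ⟨z, hz, hbnd⟩ := rounding_real A c hc f
      (fun i => ⟨Int.fract_nonneg _, (Int.fract_lt_one _).le⟩)
    set zint : Fin k → ℤ := fun i => if z i = 1 then 1 else 0 with hzint
    have hzcast : ∀ i, ((zint i : ℤ) : ℝ) = z i := by
      intro i
      rcases hz i with h | h
      · rw [hzint]; simp only [h]; norm_num
      · rw [hzint]; simp [h]
    set gv : Fin k → ℝ := fun i => ((⌊xv i⌋ + zint i : ℤ) : ℝ) with hgv
    have hmem : e gv ∈ L := by
      have : gv = ∑ i, ((⌊xv i⌋ + zint i : ℤ) : ℝ) • (Pi.basisFun ℝ (Fin k)) i := by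
        funext q
        simp only [Finset.sum_apply, Pi.smul_apply, Pi.basisFun_apply, Pi.single_apply,
          smul_eq_mul, mul_ite, mul_one, mul_zero]
        rw [Finset.sum_ite_eq]
        simp only [Finset.mem_univ, if_pos]
        rfl
      rw [this, map_sum]
      apply Submodule.sum_mem
      intro i _
      rw [LinearEquiv.map_smul]
      have : ((⌊xv i⌋ + zint i : ℤ) : ℝ) • e ((Pi.basisFun ℝ (Fin k)) i)
          = (⌊xv i⌋ + zint i : ℤ) • (bas i) := by
        rw [hbas]
        simp only [Module.Basis.map_apply]
        rw [Int.cast_smul_eq_zsmul ℝ]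
      rw [this]
      exact AddSubgroup.zsmul_mem _ ((Submodule.mem_toAddSubgroup _).mpr
        (Submodule.subset_span (Set.mem_range_self i))) _
    refine ⟨⟨e gv, hmem⟩, ?_⟩
    rw [Set.mem_vadd_set_iff_neg_vadd_mem]
    show -(e gv) +ᵥ y ∈ cube
    have hdiff : -(e gv) +ᵥ y = B.mulVec (fun i => f i - z i) := by
      have h1 : y = e xv := by rw [hxv, LinearEquiv.apply_symm_apply]
      have h2 : (fun i => f i - z i) = xv - gv := by
        funext i
        show f i - z i = xv i - gv i
        rw [hf, hgv, ← hzcast i]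
        push_cast
        have hfl := Int.floor_add_fract (xv i)
        linarith
      rw [h2, ← heapp, map_sub, h1]
      show -(e gv) + (e xv) = e xv - e gv
      abel
    rw [hdiff]
    rw [hcube, Set.mem_Icc]
    have hrow : ∀ j, |B.mulVec (fun i => f i - z i) j| ≤ D := by
      intro j
      have heq : B.mulVec (fun i => f i - z i) j = ∑ i, A (r j) (c i) * (f i - z i) := rfl
      rw [heq]
      exact hbnd (r j)
    constructor
    · intro j
      have := (abs_le.mp (hrow j)).1
      simpa using this
    · intro j
      have := (abs_le.mp (hrow j)).2
      simpa using this
  -- measure argument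
  have hfd := ZSpan.isAddFundamentalDomain' bas (MeasureTheory.volume)
  have hμle : MeasureTheory.volume (ZSpan.fundamentalDomain bas)
      ≤ MeasureTheory.volume cube := by
    calc MeasureTheory.volume (ZSpan.fundamentalDomain bas)
        = MeasureTheory.volume (⋃ g : L, ZSpan.fundamentalDomain bas ∩ (g +ᵥ cube)) := by
          rw [← Set.inter_iUnion, hcover, Set.inter_univ]
      _ ≤ ∑' g : L, MeasureTheory.volume (ZSpan.fundamentalDomain bas ∩ (g +ᵥ cube)) :=
          MeasureTheory.measure_iUnion_le _
      _ = ∑' g : L, MeasureTheory.volume ((g +ᵥ cube) ∩ ZSpan.fundamentalDomain bas) := by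
          congr 1; funext g; rw [Set.inter_comm]
      _ = MeasureTheory.volume cube := (hfd.measure_eq_tsum cube).symm
  have hvolF : MeasureTheory.volume (ZSpan.fundamentalDomain bas)
      = ENNReal.ofReal |B.det| := by
    rw [ZSpan.volume_fundamentalDomain]
    congr 2
    rw [show (Matrix.of (bas : Fin k → Fin k → ℝ)) = B.transpose by
      ext i j
      rw [Matrix.of_apply, hbase i, Matrix.transpose_apply]]
    rw [Matrix.det_transpose]
  have hvolC : MeasureTheory.volume cube = ENNReal.ofReal ((2 * D) ^ k) := by
    rw [hcube, Real.volume_Icc_pi]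
    rw [Finset.prod_congr rfl (fun i _ => by rw [show D - (-D) = 2 * D by ring])]
    rw [Finset.prod_const, Finset.card_univ, Fintype.card_fin,
      ← ENNReal.ofReal_pow (by linarith)]
  rw [hvolF, hvolC] at hμle
  have hle : |B.det| ≤ (2 * D) ^ k :=
    (ENNReal.ofReal_le_ofReal_iff (by positivity)).mp hμle
  have h1 : |B.det| ^ ((1:ℝ) / k) ≤ ((2 * D) ^ k) ^ ((1:ℝ) / k) :=
    Real.rpow_le_rpow (abs_nonneg _) hle (by positivity)
  have h2 : (((2 * D) ^ k : ℝ)) ^ ((1:ℝ) / k) = 2 * D := by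
    rw [← Real.rpow_natCast (2 * D) k, ← Real.rpow_mul (by linarith)]
    rw [mul_one_div, div_self (by exact_mod_cast hk.ne' : (k:ℝ) ≠ 0), Real.rpow_one]
  rw [h2] at h1
  linarith
end

section
/- For every positive integer d divisible by 8, the hereditary discrepancy of the set system S^d of subcubes of the boolean cube {0,1}^d satisfies herdisc(S^d) ≥ 2^{d/16}/(2e). -/
/-- The discrepancy of a set system `S` on a finite ground set `U`:
`disc(S) = min_{f : U → {-1,+1}} max_{T ∈ S} |∑_{i ∈ T} f(i)|`. -/
noncomputable def sysDisc {U : Type*} [Fintype U] (S : Finset (Finset U)) : ℝ :=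
  sInf {D : ℝ | ∃ f : U → ℝ, (∀ i, f i = 1 ∨ f i = -1) ∧
    D = ⨆ T : {T // T ∈ S}, |∑ i ∈ T.1, f i|}

/-- The hereditary discrepancy of a set system `S` on a finite ground set `U`:
`herdisc(S) = max_{W ⊆ U} disc(S|_W)`, where `S|_W = {T ∩ W : T ∈ S}`. -/
noncomputable def sysHerDisc {U : Type*} [Fintype U] [DecidableEq U]
    (S : Finset (Finset U)) : ℝ :=
  sSup {D : ℝ | ∃ W : Finset U, D = sysDisc (S.image (fun T => T ∩ W))}

/-- For `v ∈ {0,1,*}^d` (where `*` is encoded as `none`), the subcube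
`S_v = {u ∈ {0,1}^d : vᵢ ≠ * → uᵢ = vᵢ}`. -/
def subcube {d : ℕ} (v : Fin d → Option Bool) : Finset (Fin d → Bool) :=
  Finset.univ.filter (fun u => ∀ i : Fin d, ∀ b : Bool, v i = some b → u i = b)

/-- The set system `S^d` of all subcubes of the boolean cube `{0,1}^d`. -/
def cubeSystem (d : ℕ) : Finset (Finset (Fin d → Bool)) :=
  Finset.univ.image (fun v : Fin d → Option Bool => subcube v)


set_option maxHeartbeats 1000000

section auxlems
open Finset

def trip (p : Bool × Bool) : Fin 3 → Bool := fun t =>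
  if (t : ℕ) = 0 then p.1 else if (t : ℕ) = 1 then p.2 else xor p.1 p.2

lemma fact1 : ∀ g g' : Bool × Bool,
    ((Finset.univ.filter
      (fun c : Fin 3 × Bool => trip g c.1 = c.2 ∧ trip g' c.1 = c.2)).card)
    = if g = g' then 3 else 1 := by decide

def ee {d m : ℕ} (g : Fin m → Bool × Bool) : Fin d → Bool := fun i =>
  if h : (i : ℕ) < 3 * m then
    trip (g ⟨(i : ℕ) / 3, by omega⟩) ⟨(i : ℕ) % 3, by omega⟩
  else false

def vv {d m : ℕ} (c : Fin m → Fin 3 × Bool) : Fin d → Option Bool := fun i =>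
  if h : (i : ℕ) < 3 * m then
    (if ((i : ℕ) % 3) = ((c ⟨(i : ℕ) / 3, by omega⟩).1 : ℕ)
      then some (c ⟨(i : ℕ) / 3, by omega⟩).2 else none)
  else some false

lemma ee_apply {d m : ℕ} (g : Fin m → Bool × Bool) (j : Fin m) (t : Fin 3)
    (h : 3 * (j : ℕ) + (t : ℕ) < d) :
    ee g ⟨3 * (j : ℕ) + (t : ℕ), h⟩ = trip (g j) t := by
  have hlt : 3 * (j : ℕ) + (t : ℕ) < 3 * m := by
    have := j.2; have := t.2; omega
  show (if h' : 3 * (j : ℕ) + (t : ℕ) < 3 * m then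
    trip (g ⟨(3 * (j : ℕ) + (t : ℕ)) / 3, by omega⟩)
      ⟨(3 * (j : ℕ) + (t : ℕ)) % 3, by omega⟩ else false) = trip (g j) t
  rw [dif_pos hlt]
  have hA : (⟨(3 * (j : ℕ) + (t : ℕ)) / 3, by omega⟩ : Fin m) = j := by
    apply Fin.ext; show (3 * (j : ℕ) + (t : ℕ)) / 3 = (j : ℕ); have := t.2; omega
  have hB : (⟨(3 * (j : ℕ) + (t : ℕ)) % 3, by omega⟩ : Fin 3) = t := by
    apply Fin.ext; show (3 * (j : ℕ) + (t : ℕ)) % 3 = (t : ℕ); have := t.2; omega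
  rw [hA, hB]

lemma ee_inj {d m : ℕ} (hm : 3 * m ≤ d) :
    Function.Injective (ee (d := d) (m := m)) := by
  intro g g' h
  funext j
  have h0 : 3 * (j : ℕ) + ((0 : Fin 3) : ℕ) < d := by have := j.2; omega
  have h1 : 3 * (j : ℕ) + ((1 : Fin 3) : ℕ) < d := by
    have := j.2; simp; omega
  have e0 := congrFun h ⟨3 * (j : ℕ) + ((0 : Fin 3) : ℕ), h0⟩
  have e1 := congrFun h ⟨3 * (j : ℕ) + ((1 : Fin 3) : ℕ), h1⟩
  rw [ee_apply g j 0 h0, ee_apply g' j 0 h0] at e0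
  rw [ee_apply g j 1 h1, ee_apply g' j 1 h1] at e1
  simp [trip] at e0 e1
  exact Prod.ext e0 e1

lemma vv_apply_low {d m : ℕ} (c : Fin m → Fin 3 × Bool) (i : Fin d)
    (h : (i : ℕ) < 3 * m) :
    vv c i = (if ((i : ℕ) % 3) = ((c ⟨(i : ℕ) / 3, by omega⟩).1 : ℕ)
      then some (c ⟨(i : ℕ) / 3, by omega⟩).2 else none) := by
  show (if h' : (i : ℕ) < 3 * m then _ else some false) = _
  rw [dif_pos h]

lemma mem_subcube_vv {d m : ℕ} (hm : 3 * m ≤ d) (g : Fin m → Bool × Bool)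
    (c : Fin m → Fin 3 × Bool) :
    ee g ∈ subcube (vv (d := d) c) ↔ ∀ j, trip (g j) (c j).1 = (c j).2 := by
  simp only [subcube, Finset.mem_filter, Finset.mem_univ, true_and]
  constructor
  · intro hmem j
    have hj := j.2
    have ht := (c j).1.2
    have hi : 3 * (j : ℕ) + ((c j).1 : ℕ) < d := by omega
    set i : Fin d := ⟨3 * (j : ℕ) + ((c j).1 : ℕ), hi⟩ with hidef
    have hival : (i : ℕ) = 3 * (j : ℕ) + ((c j).1 : ℕ) := rfl
    have hv : vv (d := d) c i = some (c j).2 := by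
      rw [vv_apply_low c i (by omega)]
      have hA : (⟨(i : ℕ) / 3, by omega⟩ : Fin m) = j := by
        apply Fin.ext; show ((i : ℕ)) / 3 = (j : ℕ)
        omega
      rw [hA, if_pos]
      omega
    have := hmem i _ hv
    rw [ee_apply g j (c j).1 hi] at this
    exact this
  · intro hs i b hv
    by_cases h : (i : ℕ) < 3 * m
    · rw [vv_apply_low c i h] at hv
      set j : Fin m := ⟨(i : ℕ) / 3, by omega⟩ with hjdef
      have hjval : (j : ℕ) = (i : ℕ) / 3 := rfl
      by_cases h2 : ((i : ℕ) % 3) = ((c j).1 : ℕ)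
      · rw [if_pos h2] at hv
        have hb : b = (c j).2 := (Option.some_injective _ hv).symm
        have hieq : i = ⟨3 * (j : ℕ) + ((c j).1 : ℕ), by
            have := i.2; omega⟩ := by
          apply Fin.ext; show (i : ℕ) = 3 * (j : ℕ) + ((c j).1 : ℕ)
          omega
        rw [hieq, ee_apply g j (c j).1 _, hb]
        exact hs j
      · rw [if_neg h2] at hv; exact absurd hv (by simp)
    · have hv' : vv (d := d) c i = some false := by
        show (if h' : (i : ℕ) < 3 * m then _ else some false) = some false
        rw [dif_neg h]
      rw [hv'] at hv
      have hb : b = false := (Option.some_injective _ hv).symm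
      have he : ee g i = false := by
        show (if h' : (i : ℕ) < 3 * m then _ else false) = false
        rw [dif_neg h]
      rw [he, hb]

lemma inter_eq {d m : ℕ} (hm : 3 * m ≤ d) (c : Fin m → Fin 3 × Bool) :
    subcube (vv (d := d) c) ∩ (Finset.univ.image (ee (d := d) (m := m)))
    = (Finset.univ.filter
        (fun g : Fin m → Bool × Bool => ∀ j, trip (g j) (c j).1 = (c j).2)).image ee := by
  ext u
  simp only [Finset.mem_inter, Finset.mem_image, Finset.mem_filter, Finset.mem_univ,
    true_and]
  constructor
  · rintro ⟨hsub, g, rfl⟩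
    exact ⟨g, (mem_subcube_vv hm g c).mp hsub, rfl⟩
  · rintro ⟨g, hg, rfl⟩
    exact ⟨(mem_subcube_vv hm g c).mpr hg, g, rfl⟩

lemma sum_inter {d m : ℕ} (hm : 3 * m ≤ d) (c : Fin m → Fin 3 × Bool)
    (f : (Fin d → Bool) → ℝ) :
    ∑ x ∈ subcube (vv (d := d) c) ∩ (Finset.univ.image (ee (d := d) (m := m))), f x
    = ∑ g ∈ Finset.univ.filter
        (fun g : Fin m → Bool × Bool => ∀ j, trip (g j) (c j).1 = (c j).2),
        f (ee g) := by
  rw [inter_eq hm c]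
  exact Finset.sum_image (fun a _ b _ h => ee_inj hm h)

lemma ite_one_mul_ite_one (a b : Prop) [Decidable a] [Decidable b] :
    (if a then (1:ℝ) else 0) * (if b then (1:ℝ) else 0) = if a ∧ b then (1:ℝ) else 0 := by
  by_cases ha : a <;> by_cases hb : b <;> simp [ha, hb]

lemma weight_sum (g g' : Bool × Bool) :
    ∑ x : Fin 3 × Bool, (if trip g x.1 = x.2 then (1:ℝ) else 0)
        * (if trip g' x.1 = x.2 then (1:ℝ) else 0)
    = if g = g' then (3:ℝ) else 1 := by
  simp only [ite_one_mul_ite_one]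
  rw [Finset.sum_boole]
  rw [fact1 g g']
  by_cases h : g = g' <;> simp [h]

section core
open Finset
variable {α : Type*} [Fintype α] [DecidableEq α]

lemma step_ineq {β : Type*} [Fintype β] (c : ℝ) (hc : 0 ≤ c) (K : β → β → ℝ)
    (hK : ∀ g : β → ℝ, c * ∑ x, g x ^ 2 ≤ ∑ x, ∑ y, g x * g y * K x y)
    (f : α × β → ℝ) :
    (2 * c) * ∑ p : α × β, f p ^ 2 ≤
      ∑ p : α × β, ∑ q : α × β,
        f p * f q * ((if p.1 = q.1 then (3:ℝ) else 1) * K p.2 q.2) := by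
  have expand : ∀ h : α × β → ℝ, ∑ p : α × β, h p = ∑ a : α, ∑ x : β, h (a, x) :=
    fun h => Fintype.sum_prod_type h
  set B : α → α → ℝ := fun a a' => ∑ x, ∑ y, f (a, x) * f (a', y) * K x y with hB
  have hRHS : ∑ p : α × β, ∑ q : α × β,
        f p * f q * ((if p.1 = q.1 then (3:ℝ) else 1) * K p.2 q.2)
      = ∑ a : α, ∑ a' : α, (if a = a' then (3:ℝ) else 1) * B a a' := by
    rw [expand]
    calc ∑ a : α, ∑ x : β, ∑ q : α × β,
          f (a, x) * f q * ((if a = q.1 then (3:ℝ) else 1) * K x q.2)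
        = ∑ a : α, ∑ x : β, ∑ a' : α, ∑ y : β,
          (if a = a' then (3:ℝ) else 1) * (f (a, x) * f (a', y) * K x y) := by
          refine Finset.sum_congr rfl fun a _ => Finset.sum_congr rfl fun x _ => ?_
          rw [expand]
          exact Finset.sum_congr rfl fun a' _ => Finset.sum_congr rfl fun y _ => by ring
      _ = ∑ a : α, ∑ a' : α, ∑ x : β, ∑ y : β,
          (if a = a' then (3:ℝ) else 1) * (f (a, x) * f (a', y) * K x y) := by
          exact Finset.sum_congr rfl fun a _ => Finset.sum_comm
      _ = ∑ a : α, ∑ a' : α, (if a = a' then (3:ℝ) else 1) * B a a' := by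
          refine Finset.sum_congr rfl fun a _ => Finset.sum_congr rfl fun a' _ => ?_
          rw [hB, Finset.mul_sum]
          exact Finset.sum_congr rfl fun x _ => (Finset.mul_sum _ _ _).symm
  rw [hRHS, expand]
  have h1 : ∑ a : α, ∑ a' : α, (if a = a' then (3:ℝ) else 1) * B a a'
      = (∑ a : α, 2 * B a a) + ∑ a : α, ∑ a' : α, B a a' := by
    have hsplit : ∀ a a' : α, (if a = a' then (3:ℝ) else 1) * B a a'
        = (if a' = a then 2 * B a a' else 0) + B a a' := by
      intro a a'; by_cases h : a = a' <;> simp [h, eq_comm] <;> ring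
    simp only [hsplit, Finset.sum_add_distrib]
    congr 1
    refine Finset.sum_congr rfl fun a _ => ?_
    rw [Finset.sum_ite_eq']
    simp
  rw [h1]
  have hdiag : ∀ a, c * ∑ x, f (a, x) ^ 2 ≤ B a a := fun a => hK (fun x => f (a, x))
  have hpos : (0:ℝ) ≤ ∑ a : α, ∑ a' : α, B a a' := by
    have swap : ∑ a : α, ∑ a' : α, B a a'
        = ∑ x : β, ∑ y : β, (∑ a, f (a, x)) * (∑ a', f (a', y)) * K x y := by
      calc ∑ a : α, ∑ a' : α, B a a'
          = ∑ a : α, ∑ x : β, ∑ a' : α, ∑ y : β, f (a, x) * f (a', y) * K x y := by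
            refine Finset.sum_congr rfl fun a _ => ?_
            rw [hB]
            exact Finset.sum_comm
        _ = ∑ x : β, ∑ a : α, ∑ a' : α, ∑ y : β, f (a, x) * f (a', y) * K x y :=
            Finset.sum_comm
        _ = ∑ x : β, ∑ a : α, ∑ y : β, ∑ a' : α, f (a, x) * f (a', y) * K x y := by
            exact Finset.sum_congr rfl fun x _ => Finset.sum_congr rfl fun a _ =>
              Finset.sum_comm
        _ = ∑ x : β, ∑ y : β, ∑ a : α, ∑ a' : α, f (a, x) * f (a', y) * K x y := by
            exact Finset.sum_congr rfl fun x _ => Finset.sum_comm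
        _ = ∑ x : β, ∑ y : β, (∑ a, f (a, x)) * (∑ a', f (a', y)) * K x y := by
            refine Finset.sum_congr rfl fun x _ => Finset.sum_congr rfl fun y _ => ?_
            rw [Finset.sum_mul_sum, Finset.sum_mul]
            refine Finset.sum_congr rfl fun a _ => ?_
            rw [Finset.sum_mul]
    rw [swap]
    have := hK (fun x => ∑ a, f (a, x))
    have h2 : 0 ≤ c * ∑ x, (∑ a, f (a, x)) ^ 2 := by positivity
    exact le_trans h2 this
  have h3 : ∑ a : α, 2 * (c * ∑ x, f (a, x) ^ 2) ≤ ∑ a : α, 2 * B a a := by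
    refine Finset.sum_le_sum fun a _ => ?_
    have := hdiag a; linarith
  have h4 : (2*c) * ∑ a : α, ∑ x : β, f (a, x) ^ 2
      = ∑ a : α, 2 * (c * ∑ x, f (a, x) ^ 2) := by
    rw [Finset.mul_sum]
    exact Finset.sum_congr rfl fun a _ => by ring
  linarith

lemma core_ineq (m : ℕ) (f : (Fin m → α) → ℝ) :
    (2:ℝ)^m * ∑ u : Fin m → α, f u ^ 2 ≤
    ∑ u : Fin m → α, ∑ u' : Fin m → α,
      f u * f u' * ∏ j, (if u j = u' j then (3:ℝ) else 1) := by
  induction m with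
  | zero =>
      have h0 : ∀ u u' : Fin 0 → α, u = u' := fun u u' => funext (fun i => i.elim0)
      simp [Finset.univ_unique, h0]
      ring_nf
      simp [sq]
  | succ m ih =>
      have H := step_ineq (α := α) (β := Fin m → α) ((2:ℝ)^m) (by positivity)
          (fun r r' => ∏ j, (if r j = r' j then (3:ℝ) else 1)) ih
          (fun p => f (Fin.cons p.1 p.2))
      have hL : ∑ u : Fin (m+1) → α, f u ^ 2
          = ∑ p : α × (Fin m → α), f (Fin.cons p.1 p.2) ^ 2 := by
        rw [← Equiv.sum_comp (Fin.consEquiv fun _ => α) (fun u => f u ^ 2)]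
        rfl
      have h1 : ∀ u : Fin (m+1) → α,
          (∑ u' : Fin (m+1) → α, f u * f u' * ∏ j, (if u j = u' j then (3:ℝ) else 1))
          = ∑ q : α × (Fin m → α), f u * f (Fin.cons q.1 q.2) *
              ∏ j, (if u j = (Fin.cons q.1 q.2 : Fin (m+1) → α) j then (3:ℝ) else 1) := by
        intro u
        rw [← Equiv.sum_comp (Fin.consEquiv fun _ => α)
          (fun u' => f u * f u' * ∏ j, (if u j = u' j then (3:ℝ) else 1))]
        rfl
      have hR : (∑ u : Fin (m+1) → α, ∑ u' : Fin (m+1) → α,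
            f u * f u' * ∏ j, (if u j = u' j then (3:ℝ) else 1))
          = ∑ p : α × (Fin m → α), ∑ q : α × (Fin m → α),
              f (Fin.cons p.1 p.2) * f (Fin.cons q.1 q.2) *
              ∏ j, (if (Fin.cons p.1 p.2 : Fin (m+1) → α) j
                    = (Fin.cons q.1 q.2 : Fin (m+1) → α) j then (3:ℝ) else 1) := by
        simp only [h1]
        rw [← Equiv.sum_comp (Fin.consEquiv fun _ => α)
          (fun u => ∑ q : α × (Fin m → α), f u * f (Fin.cons q.1 q.2) *
              ∏ j, (if u j = (Fin.cons q.1 q.2 : Fin (m+1) → α) j then (3:ℝ) else 1))]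
        rfl
      have hprod : ∀ p q : α × (Fin m → α),
          (∏ j, (if (Fin.cons p.1 p.2 : Fin (m+1) → α) j
                = (Fin.cons q.1 q.2 : Fin (m+1) → α) j then (3:ℝ) else 1))
          = (if p.1 = q.1 then (3:ℝ) else 1)
            * ∏ j, (if p.2 j = q.2 j then (3:ℝ) else 1) := by
        intro p q
        rw [Fin.prod_univ_succ]
        simp
      rw [hL, hR]
      simp only [hprod]
      calc (2:ℝ)^(m+1) * ∑ p : α × (Fin m → α), f (Fin.cons p.1 p.2) ^ 2
          = (2 * (2:ℝ)^m) * ∑ p : α × (Fin m → α), f (Fin.cons p.1 p.2) ^ 2 := by ring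
        _ ≤ _ := H

end core

lemma exists_good {d m : ℕ} (hm : 3 * m ≤ d) (f : (Fin d → Bool) → ℝ)
    (hf : ∀ x, f x = 1 ∨ f x = -1) :
    ∃ c : Fin m → Fin 3 × Bool,
      ((4:ℝ)/3)^m ≤ (∑ x ∈ subcube (vv (d := d) c)
        ∩ (Finset.univ.image (ee (d := d) (m := m))), f x)^2 := by
  classical
  set F : (Fin m → Bool × Bool) → ℝ := fun g => f (ee g) with hF
  set S : (Fin m → Fin 3 × Bool) → ℝ := fun c =>
    ∑ g ∈ Finset.univ.filter
      (fun g : Fin m → Bool × Bool => ∀ j, trip (g j) (c j).1 = (c j).2), F g with hS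
  have hSrw : ∀ c, S c = ∑ g : Fin m → Bool × Bool,
      F g * ∏ j, (if trip (g j) (c j).1 = (c j).2 then (1:ℝ) else 0) := by
    intro c
    simp only [hS, Finset.sum_filter]
    refine Finset.sum_congr rfl fun g _ => ?_
    by_cases hP : ∀ j, trip (g j) (c j).1 = (c j).2
    · rw [if_pos hP, Finset.prod_congr rfl (fun j _ => if_pos (hP j)),
        Finset.prod_const_one, mul_one]
    · rw [if_neg hP]
      push_neg at hP
      obtain ⟨j, hj⟩ := hP
      symm
      rw [Finset.prod_eq_zero (Finset.mem_univ j)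
        (show (if trip (g j) (c j).1 = (c j).2 then (1:ℝ) else 0) = 0 from if_neg hj),
        mul_zero]
  -- sum of squares identity
  have key : ∑ c : Fin m → Fin 3 × Bool, (S c)^2
      = ∑ g : Fin m → Bool × Bool, ∑ g' : Fin m → Bool × Bool,
          F g * F g' * ∏ j, (if g j = g' j then (3:ℝ) else 1) := by
    calc ∑ c : Fin m → Fin 3 × Bool, (S c)^2
        = ∑ c : Fin m → Fin 3 × Bool, ∑ g : Fin m → Bool × Bool,
            ∑ g' : Fin m → Bool × Bool,
            F g * F g' * ∏ j, ((if trip (g j) (c j).1 = (c j).2 then (1:ℝ) else 0)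
              * (if trip (g' j) (c j).1 = (c j).2 then (1:ℝ) else 0)) := by
          refine Finset.sum_congr rfl fun c _ => ?_
          rw [sq, hSrw c, Finset.sum_mul_sum]
          refine Finset.sum_congr rfl fun g _ => Finset.sum_congr rfl fun g' _ => ?_
          rw [Finset.prod_mul_distrib]
          ring
      _ = ∑ g : Fin m → Bool × Bool, ∑ g' : Fin m → Bool × Bool,
            ∑ c : Fin m → Fin 3 × Bool,
            F g * F g' * ∏ j, ((if trip (g j) (c j).1 = (c j).2 then (1:ℝ) else 0)
              * (if trip (g' j) (c j).1 = (c j).2 then (1:ℝ) else 0)) := by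
          rw [Finset.sum_comm]
          exact Finset.sum_congr rfl fun g _ => Finset.sum_comm
      _ = ∑ g : Fin m → Bool × Bool, ∑ g' : Fin m → Bool × Bool,
          F g * F g' * ∏ j, (if g j = g' j then (3:ℝ) else 1) := by
          refine Finset.sum_congr rfl fun g _ => Finset.sum_congr rfl fun g' _ => ?_
          rw [← Finset.mul_sum]
          congr 1
          calc ∑ c : Fin m → Fin 3 × Bool,
              ∏ j, ((if trip (g j) (c j).1 = (c j).2 then (1:ℝ) else 0)
                * (if trip (g' j) (c j).1 = (c j).2 then (1:ℝ) else 0))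
              = ∏ j, ∑ x : Fin 3 × Bool,
                ((if trip (g j) x.1 = x.2 then (1:ℝ) else 0)
                  * (if trip (g' j) x.1 = x.2 then (1:ℝ) else 0)) := by
                rw [Finset.prod_univ_sum]
                rw [Fintype.piFinset_univ]
            _ = ∏ j, (if g j = g' j then (3:ℝ) else 1) :=
                Finset.prod_congr rfl fun j _ => weight_sum (g j) (g' j)
  have hF2 : ∑ g : Fin m → Bool × Bool, F g ^ 2 = 4^m := by
    have : ∀ g : Fin m → Bool × Bool, F g ^ 2 = 1 := by
      intro g; rcases hf (ee g) with h | h <;> simp [hF, h]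
    rw [Finset.sum_congr rfl fun g _ => this g, Finset.sum_const, Finset.card_univ]
    simp [Fintype.card_fun]
  have hlow : (8:ℝ)^m ≤ ∑ c : Fin m → Fin 3 × Bool, (S c)^2 := by
    rw [key]
    have := core_ineq (α := Bool × Bool) m F
    rw [hF2] at this
    calc (8:ℝ)^m = (2:ℝ)^m * 4^m := by rw [← mul_pow]; norm_num
      _ ≤ _ := this
  have havg : ∑ c : Fin m → Fin 3 × Bool, ((4:ℝ)/3)^m
      ≤ ∑ c : Fin m → Fin 3 × Bool, (S c)^2 := by
    rw [Finset.sum_const, Finset.card_univ]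
    have hcard : Fintype.card (Fin m → Fin 3 × Bool) = 6^m := by
      simp [Fintype.card_fun]
    rw [hcard]
    have : ((6:ℕ)^m) • ((4:ℝ)/3)^m = (8:ℝ)^m := by
      rw [nsmul_eq_mul]
      push_cast
      rw [← mul_pow]
      norm_num
    rw [this]
    exact hlow
  obtain ⟨c, _, hc⟩ := Finset.exists_le_of_sum_le Finset.univ_nonempty havg
  refine ⟨c, ?_⟩
  rw [sum_inter hm c f]
  exact hc

end auxlems

section arith

lemma hdlb_arith (d m : ℕ) (hd2 : (d : ℝ) ≤ 3 * (m : ℝ) + 2) :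
    ((2 : ℝ) ^ ((d : ℝ) / 16) / (2 * Real.exp 1)) ^ 2 ≤ ((4:ℝ)/3) ^ m := by
  have he : (2:ℝ) ≤ Real.exp 1 := by
    have := Real.add_one_le_exp (1:ℝ); linarith
  have hb2 : ((2 : ℝ) ^ ((d : ℝ) / 16) / (2 * Real.exp 1)) ^ 2
      = (2:ℝ) ^ ((d:ℝ)/8) / (2 * Real.exp 1) ^ 2 := by
    rw [div_pow]
    congr 1
    rw [← Real.rpow_natCast ((2:ℝ) ^ ((d:ℝ)/16)) 2, ← Real.rpow_mul (by norm_num)]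
    congr 1
    push_cast
    ring
  have hX : (0:ℝ) < (2:ℝ) ^ (3*(m:ℝ)/8) := Real.rpow_pos_of_pos two_pos _
  have h1 : (2:ℝ) ^ ((d:ℝ)/8) ≤ (2:ℝ) ^ ((3*(m:ℝ)+2)/8) :=
    Real.rpow_le_rpow_of_exponent_le one_le_two (by linarith)
  have h2 : (2:ℝ) ^ ((3*(m:ℝ)+2)/8) = (2:ℝ) ^ (3*(m:ℝ)/8) * (2:ℝ) ^ ((1:ℝ)/4) := by
    rw [← Real.rpow_add two_pos]
    congr 1
    ring
  have h3 : (2:ℝ) ^ ((1:ℝ)/4) ≤ 2 := by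
    calc (2:ℝ) ^ ((1:ℝ)/4) ≤ (2:ℝ) ^ (1:ℝ) :=
          Real.rpow_le_rpow_of_exponent_le one_le_two (by norm_num)
      _ = 2 := Real.rpow_one 2
  have h4 : (16:ℝ) ≤ (2 * Real.exp 1) ^ 2 := by nlinarith
  have hbase : (2:ℝ) ^ ((3:ℝ)/8) ≤ 4/3 := by
    refine le_of_pow_le_pow_left₀ (n := 8) (by norm_num) (by norm_num) ?_
    have hcalc : ((2:ℝ) ^ ((3:ℝ)/8)) ^ (8:ℕ) = (2:ℝ) ^ (3:ℝ) := by
      rw [← Real.rpow_natCast ((2:ℝ) ^ ((3:ℝ)/8)) 8, ← Real.rpow_mul (by norm_num)]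
      norm_num
    rw [hcalc, show (3:ℝ) = ((3:ℕ):ℝ) by norm_num, Real.rpow_natCast]
    norm_num
  have h5 : (2:ℝ) ^ (3*(m:ℝ)/8) ≤ ((4:ℝ)/3) ^ m := by
    have hrw : (2:ℝ) ^ (3*(m:ℝ)/8) = ((2:ℝ) ^ ((3:ℝ)/8)) ^ m := by
      rw [← Real.rpow_natCast ((2:ℝ) ^ ((3:ℝ)/8)) m, ← Real.rpow_mul (by norm_num)]
      congr 1
      ring
    rw [hrw]
    exact pow_le_pow_left₀ (Real.rpow_nonneg (by norm_num) _) hbase m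
  calc ((2 : ℝ) ^ ((d : ℝ) / 16) / (2 * Real.exp 1)) ^ 2
      = (2:ℝ) ^ ((d:ℝ)/8) / (2 * Real.exp 1) ^ 2 := hb2
    _ ≤ ((2:ℝ) ^ (3*(m:ℝ)/8) * 2) / 16 := by
        refine div_le_div₀ (by positivity) ?_ (by norm_num) h4
        calc (2:ℝ) ^ ((d:ℝ)/8) ≤ (2:ℝ) ^ ((3*(m:ℝ)+2)/8) := h1
          _ = (2:ℝ) ^ (3*(m:ℝ)/8) * (2:ℝ) ^ ((1:ℝ)/4) := h2
          _ ≤ (2:ℝ) ^ (3*(m:ℝ)/8) * 2 := by nlinarith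
    _ ≤ (2:ℝ) ^ (3*(m:ℝ)/8) := by nlinarith
    _ ≤ ((4:ℝ)/3) ^ m := h5

end arith

/-- For every positive integer `d` divisible by `8`,
`herdisc(S^d) ≥ 2^{d/16} / (2e)`. -/
theorem cubeSystem_herdisc_lower_bound (d : ℕ) (hd : 0 < d) (h8 : 8 ∣ d) :
    (2 : ℝ) ^ ((d : ℝ) / 16) / (2 * Real.exp 1) ≤ sysHerDisc (cubeSystem d) := by
  classical
  set m : ℕ := d / 3 with hmdef
  have hm : 3 * m ≤ d := by omega
  have hd2 : (d : ℝ) ≤ 3 * (m : ℝ) + 2 := by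
    have h : d ≤ 3 * m + 2 := by omega
    push_cast
    exact_mod_cast h
  set W : Finset (Fin d → Bool) := Finset.univ.image (ee (d := d) (m := m)) with hW
  set bound : ℝ := (2 : ℝ) ^ ((d : ℝ) / 16) / (2 * Real.exp 1) with hbd
  have hbound_nonneg : 0 ≤ bound := by
    rw [hbd]; positivity
  have harith : bound ^ 2 ≤ ((4:ℝ)/3) ^ m := hdlb_arith d m hd2
  have hdisc : bound ≤ sysDisc ((cubeSystem d).image (fun T => T ∩ W)) := by
    apply le_csInf
    · exact ⟨_, fun _ => (1:ℝ), fun i => Or.inl rfl, rfl⟩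
    · rintro D ⟨f, hf, rfl⟩
      obtain ⟨c, hc⟩ := exists_good hm f hf
      have hT0 : subcube (vv (d := d) c) ∩ W ∈ (cubeSystem d).image (fun T => T ∩ W) := by
        apply Finset.mem_image_of_mem
        exact Finset.mem_image_of_mem _ (Finset.mem_univ (vv (d := d) c))
      have habs : bound ≤ |∑ i ∈ subcube (vv (d := d) c) ∩ W, f i| := by
        have h1 : bound ^ 2 ≤ (∑ i ∈ subcube (vv (d := d) c) ∩ W, f i) ^ 2 :=
          le_trans harith (by exact_mod_cast hc)
        calc bound = Real.sqrt (bound ^ 2) := (Real.sqrt_sq hbound_nonneg).symm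
          _ ≤ Real.sqrt ((∑ i ∈ subcube (vv (d := d) c) ∩ W, f i) ^ 2) :=
              Real.sqrt_le_sqrt h1
          _ = |∑ i ∈ subcube (vv (d := d) c) ∩ W, f i| := Real.sqrt_sq_eq_abs _
      refine le_trans habs ?_
      exact le_ciSup (f := fun T : {T // T ∈ (cubeSystem d).image (fun T => T ∩ W)} =>
        |∑ i ∈ T.1, f i|) ((Set.finite_range _).bddAbove) ⟨_, hT0⟩
  have hmem : sysDisc ((cubeSystem d).image (fun T => T ∩ W))
      ∈ {D : ℝ | ∃ W' : Finset (Fin d → Bool),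
          D = sysDisc ((cubeSystem d).image (fun T => T ∩ W'))} := ⟨W, rfl⟩
  have hbdd : BddAbove {D : ℝ | ∃ W' : Finset (Fin d → Bool),
      D = sysDisc ((cubeSystem d).image (fun T => T ∩ W'))} := by
    refine ⟨(Fintype.card (Fin d → Bool) : ℝ), ?_⟩
    rintro D ⟨W', rfl⟩
    have hset : (⨆ T : {T // T ∈ (cubeSystem d).image (fun T => T ∩ W')},
        |∑ i ∈ T.1, (fun _ : Fin d → Bool => (1:ℝ)) i|)
        ≤ (Fintype.card (Fin d → Bool) : ℝ) := by
      apply Real.iSup_le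
      · intro T
        rw [Finset.sum_const, nsmul_eq_mul, mul_one,
          abs_of_nonneg (by positivity)]
        exact_mod_cast Finset.card_le_univ T.1
      · positivity
    refine le_trans (csInf_le ?_ ?_) hset
    · refine ⟨0, ?_⟩
      rintro D' ⟨f, hf, rfl⟩
      exact Real.iSup_nonneg (fun T => abs_nonneg _)
    · exact ⟨fun _ => (1:ℝ), fun i => Or.inl rfl, rfl⟩
  exact le_trans hdisc (le_csSup hbdd hmem)
end

section
/- For every positive integer d divisible by 8, the hereditary discrepancy of the matrix G_d satisfies herdisc(G_d) ≥ 2^{3d/16}/(2e). -/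
/-- The character `χ_v(u) = (-1)^{⟨v,u⟩₂}` of `F₂^d`, realized as
`(-1)` raised to the number of coordinates where both `v` and `u` equal `1`
(which has the parity of the `F₂` inner product `⟨v,u⟩₂`). -/
def chi {d : ℕ} (v u : Fin d → Bool) : ℝ :=
  (-1 : ℝ) ^ (Finset.univ.filter (fun i => v i = true ∧ u i = true)).card

/-- The Hamming weight of `v ∈ {0,1}^d`. -/
def wt {d : ℕ} (v : Fin d → Bool) : ℕ :=
  (Finset.univ.filter (fun i => v i = true)).card

/-- The matrix `G_d` whose rows are the characters `χ_v` with `|v| = d/8`,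
with columns indexed by `u ∈ {0,1}^d`. -/
def Gmat (d : ℕ) : Matrix {v : Fin d → Bool // wt v = d / 8} (Fin d → Bool) ℝ :=
  fun v u => chi v.1 u

namespace GmatAux

open Finset

/-- Inner product on `F₂³` (as `Fin 3 → Bool`). -/
def ip3 (a b : Fin 3 → Bool) : Bool := xor (a 0 && b 0) (xor (a 1 && b 1) (a 2 && b 2))

def sZ (a b : Fin 3 → Bool) : ℤ := if ip3 a b then -1 else 1

noncomputable def sR (a b : Fin 3 → Bool) : ℝ := if ip3 a b then -1 else 1

lemma ip3_orthZ : ∀ b b' : Fin 3 → Bool,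
    (∑ a : Fin 3 → Bool, sZ b a * sZ b' a) = if b = b' then 8 else 0 := by decide

lemma ip3_nondeg : ∀ b b' : Fin 3 → Bool, (∀ a, ip3 b a = ip3 b' a) → b = b' := by decide

lemma sR_eq_cast (a b : Fin 3 → Bool) : sR a b = ((sZ a b : ℤ) : ℝ) := by
  unfold sR sZ; split <;> norm_num

lemma sR_orth (b b' : Fin 3 → Bool) :
    (∑ a : Fin 3 → Bool, sR b a * sR b' a) = if b = b' then (8 : ℝ) else 0 := by
  have h := congrArg (fun z : ℤ => (z : ℝ)) (ip3_orthZ b b')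
  simp only [sR_eq_cast]
  push_cast at h ⊢
  exact h

section

variable {d mm : ℕ} (e : Fin d ≃ Fin mm × (Fin 3 → Bool))

/-- The row vector attached to `f`: one `1` in each block, at position `f j`. -/
def vrow (f : Fin mm → Fin 3 → Bool) : Fin d → Bool :=
  fun i => decide ((e i).2 = f (e i).1)

/-- The column vector attached to `g`: block `j` is the linear functional `⟨g j, ·⟩`. -/
def ucol (g : Fin mm → Fin 3 → Bool) : Fin d → Bool :=
  fun i => ip3 (g (e i).1) ((e i).2)

lemma vrow_true_iff (f : Fin mm → Fin 3 → Bool) (i : Fin d) :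
    vrow e f i = true ↔ (e i).2 = f (e i).1 := by simp [vrow]

lemma wt_vrow (f : Fin mm → Fin 3 → Bool) : wt (vrow e f) = mm := by
  unfold wt
  have hcb : (univ.filter fun i => vrow e f i = true).card = (univ : Finset (Fin mm)).card := by
    apply Finset.card_bij' (fun i _ => (e i).1) (fun j _ => e.symm (j, f j))
    · intro a _; exact mem_univ _
    · intro j _
      simp [vrow]
    · intro i hi
      simp only [mem_filter, vrow_true_iff] at hi
      rw [← hi.2]
      simp
    · intro j _
      simp
  simpa using hcb

lemma chi_card (f g : Fin mm → Fin 3 → Bool) :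
    (univ.filter fun i => vrow e f i = true ∧ ucol e g i = true).card
      = (univ.filter fun j => ip3 (g j) (f j) = true).card := by
  apply Finset.card_bij' (fun i _ => (e i).1) (fun j _ => e.symm (j, f j))
  · intro i hi
    simp only [mem_filter, vrow_true_iff] at hi
    obtain ⟨-, h1, h2⟩ := hi
    simp only [ucol] at h2
    rw [mem_filter]
    exact ⟨mem_univ _, by rw [← h1]; exact h2⟩
  · intro j hj
    rw [mem_filter] at hj
    rw [mem_filter]
    refine ⟨mem_univ _, ?_, ?_⟩
    · simp [vrow]
    · simp only [ucol]
      simpa using hj.2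
  · intro i hi
    simp only [mem_filter, vrow_true_iff] at hi
    rw [← hi.2.1]
    simp
  · intro j _
    simp

lemma chi_eq (f g : Fin mm → Fin 3 → Bool) :
    chi (vrow e f) (ucol e g) = ∏ j, sR (g j) (f j) := by
  unfold chi
  rw [chi_card e f g, Finset.card_filter, ← Finset.prod_pow_eq_pow_sum]
  apply Finset.prod_congr rfl
  intro j _
  unfold sR
  split <;> simp_all

lemma ucol_inj : Function.Injective (ucol e) := by
  intro g g' h
  funext j
  apply ip3_nondeg
  intro a
  have := congrFun h (e.symm (j, a))
  simpa [ucol] using this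

end

lemma sum_sq (mm : ℕ) (y : (Fin mm → Fin 3 → Bool) → ℝ) (hy : ∀ g, y g = 1 ∨ y g = -1) :
    ∑ f : Fin mm → Fin 3 → Bool,
        (∑ g : Fin mm → Fin 3 → Bool, (∏ j, sR (g j) (f j)) * y g) ^ 2
      = (8 : ℝ) ^ mm * (8 : ℝ) ^ mm := by
  have key : ∀ f : Fin mm → Fin 3 → Bool,
      (∑ g : Fin mm → Fin 3 → Bool, (∏ j, sR (g j) (f j)) * y g) ^ 2
        = ∑ g : Fin mm → Fin 3 → Bool, ∑ g' : Fin mm → Fin 3 → Bool,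
            (y g * y g') * ∏ j, (sR (g j) (f j) * sR (g' j) (f j)) := by
    intro f
    rw [sq, Finset.sum_mul_sum]
    refine Finset.sum_congr rfl fun g _ => Finset.sum_congr rfl fun g' _ => ?_
    rw [Finset.prod_mul_distrib]; ring
  calc ∑ f : Fin mm → Fin 3 → Bool,
          (∑ g : Fin mm → Fin 3 → Bool, (∏ j, sR (g j) (f j)) * y g) ^ 2
      = ∑ f : Fin mm → Fin 3 → Bool, ∑ g : Fin mm → Fin 3 → Bool,
          ∑ g' : Fin mm → Fin 3 → Bool,
            (y g * y g') * ∏ j, (sR (g j) (f j) * sR (g' j) (f j)) :=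
        Finset.sum_congr rfl fun f _ => key f
    _ = ∑ g : Fin mm → Fin 3 → Bool, ∑ g' : Fin mm → Fin 3 → Bool,
          (y g * y g') * ∑ f : Fin mm → Fin 3 → Bool,
            ∏ j, (sR (g j) (f j) * sR (g' j) (f j)) := by
        rw [Finset.sum_comm]
        refine Finset.sum_congr rfl fun g _ => ?_
        rw [Finset.sum_comm]
        refine Finset.sum_congr rfl fun g' _ => ?_
        rw [Finset.mul_sum]
    _ = ∑ g : Fin mm → Fin 3 → Bool, ∑ g' : Fin mm → Fin 3 → Bool,
          (y g * y g') * (if g = g' then (8 : ℝ) ^ mm else 0) := by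
        refine Finset.sum_congr rfl fun g _ => Finset.sum_congr rfl fun g' _ => ?_
        congr 1
        rw [show (∑ f : Fin mm → Fin 3 → Bool, ∏ j, (sR (g j) (f j) * sR (g' j) (f j)))
            = ∏ j, ∑ a : Fin 3 → Bool, sR (g j) a * sR (g' j) a from by
          rw [Finset.prod_univ_sum (fun _ => univ) (fun j a => sR (g j) a * sR (g' j) a),
            Fintype.piFinset_univ]]
        simp only [sR_orth]
        by_cases h : g = g'
        · subst h; simp
        · rw [if_neg h]
          obtain ⟨j, hj⟩ := Function.ne_iff.mp h
          exact Finset.prod_eq_zero (mem_univ j) (if_neg hj)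
    _ = ∑ g : Fin mm → Fin 3 → Bool, (8 : ℝ) ^ mm := by
        refine Finset.sum_congr rfl fun g _ => ?_
        rw [Finset.sum_eq_single_of_mem g (mem_univ g)
          (fun b _ hb => by rw [if_neg fun hh => hb hh.symm, mul_zero])]
        rcases hy g with h | h <;> rw [h] <;> norm_num
    _ = (8 : ℝ) ^ mm * (8 : ℝ) ^ mm := by
        rw [Finset.sum_const, Finset.card_univ, Fintype.card_fun, nsmul_eq_mul]
        simp only [Fintype.card_fun, Fintype.card_bool, Fintype.card_fin]
        push_cast
        norm_num [pow_mul]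

lemma exists_big (mm : ℕ) (R : (Fin mm → Fin 3 → Bool) → ℝ)
    (h : ∑ f : Fin mm → Fin 3 → Bool, (R f) ^ 2 = (8 : ℝ) ^ mm * (8 : ℝ) ^ mm) :
    ∃ f, (8 : ℝ) ^ mm ≤ (R f) ^ 2 := by
  by_contra hc
  push_neg at hc
  have hlt := Finset.sum_lt_sum_of_nonempty
    (Finset.univ_nonempty (α := Fin mm → Fin 3 → Bool)) (fun f _ => hc f)
  rw [h, Finset.sum_const, Finset.card_univ, Fintype.card_fun, nsmul_eq_mul] at hlt
  simp only [Fintype.card_fun, Fintype.card_bool, Fintype.card_fin] at hlt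
  push_cast at hlt
  norm_num at hlt

end GmatAux

open GmatAux Finset in
/-- For every positive integer `d` divisible by `8`,
`herdisc(G_d) ≥ 2^{3d/16} / (2e)`. -/
theorem Gmat_herdisc_lower_bound (d : ℕ) (hd : 0 < d) (h8 : 8 ∣ d) :
    (2 : ℝ) ^ (3 * (d : ℝ) / 16) / (2 * Real.exp 1) ≤ matHerDisc (Gmat d) := by
  obtain ⟨m, hm⟩ := h8
  have hdm : d / 8 = m := by omega
  have hcard : Fintype.card (Fin d) = Fintype.card (Fin m × (Fin 3 → Bool)) := by
    simp [hm]
    ring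
  let e : Fin d ≃ Fin m × (Fin 3 → Bool) := Fintype.equivOfCardEq hcard
  set T : ℝ := (2 : ℝ) ^ (3 * (d : ℝ) / 16) with hT
  have hT0 : (0 : ℝ) ≤ T := Real.rpow_nonneg (by norm_num) _
  have hTsq : T ^ 2 = (8 : ℝ) ^ m := by
    rw [hT, ← Real.rpow_natCast ((2 : ℝ) ^ (3 * (d : ℝ) / 16)) 2,
      ← Real.rpow_mul (by norm_num : (0:ℝ) ≤ 2)]
    rw [show 3 * (d : ℝ) / 16 * (2 : ℕ) = ((3 * m : ℕ) : ℝ) by push_cast [hm]; ring]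
    rw [Real.rpow_natCast, pow_mul]
    norm_num
  let W : Finset (Fin d → Bool) := univ.image (ucol e)
  have hmem : ∀ g, ucol e g ∈ W := fun g => mem_image_of_mem _ (mem_univ g)
  let A' := (Gmat d).submatrix id (fun i : {x // x ∈ W} => i.1)
  have hwt : ∀ f : Fin m → Fin 3 → Bool, wt (vrow e f) = d / 8 := by
    intro f; rw [hdm]; exact wt_vrow e f
  have hdisc : T ≤ matDisc A' := by
    refine le_csInf ⟨_, ⟨(fun _ => 1), fun i => Or.inl rfl, rfl⟩⟩ ?_
    rintro D ⟨x, hx, rfl⟩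
    set y : (Fin m → Fin 3 → Bool) → ℝ := fun g => x ⟨ucol e g, hmem g⟩ with hy'
    have hy : ∀ g, y g = 1 ∨ y g = -1 := fun g => hx _
    have hrow : ∀ f : Fin m → Fin 3 → Bool,
        (∑ i : {x // x ∈ W}, A' ⟨vrow e f, hwt f⟩ i * x i)
          = ∑ g : Fin m → Fin 3 → Bool, (∏ j, sR (g j) (f j)) * y g := by
      intro f
      refine (Finset.sum_bij (fun g _ => (⟨ucol e g, hmem g⟩ : {x // x ∈ W}))
        ?_ ?_ ?_ ?_).symm
      · intro g _; exact mem_univ _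
      · intro g1 _ g2 _ hgg
        exact ucol_inj e (by simpa [Subtype.mk.injEq] using hgg)
      · rintro ⟨u, hu⟩ -
        obtain ⟨g, -, hg⟩ := mem_image.mp hu
        exact ⟨g, mem_univ g, by simp [hg]⟩
      · intro g _
        show (∏ j, sR (g j) (f j)) * y g = A' ⟨vrow e f, hwt f⟩ ⟨ucol e g, hmem g⟩ * x _
        have : A' ⟨vrow e f, hwt f⟩ ⟨ucol e g, hmem g⟩ = chi (vrow e f) (ucol e g) := rfl
        rw [this, chi_eq]
    obtain ⟨f₀, hf₀⟩ := exists_big m _ (sum_sq m y hy)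
    have h1 : T ≤ |∑ g : Fin m → Fin 3 → Bool, (∏ j, sR (g j) (f₀ j)) * y g| := by
      rw [← Real.sqrt_sq_eq_abs, ← Real.sqrt_sq hT0]
      exact Real.sqrt_le_sqrt (by rw [hTsq]; exact hf₀)
    refine h1.trans ?_
    rw [← hrow f₀]
    exact le_ciSup (f := fun j : {v : Fin d → Bool // wt v = d / 8} =>
        |∑ i : {x // x ∈ W}, A' j i * x i|)
      (Set.Finite.bddAbove (Set.finite_range _)) ⟨vrow e f₀, hwt f₀⟩
  have hher : matDisc A' ≤ matHerDisc (Gmat d) := by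
    refine le_csSup ?_ ⟨W, rfl⟩
    refine BddAbove.mono ?_ (Set.finite_range (fun W' : Finset (Fin d → Bool) =>
      matDisc ((Gmat d).submatrix id (fun i : {x // x ∈ W'} => i.1)))).bddAbove
    rintro D ⟨W', rfl⟩
    exact ⟨W', rfl⟩
  have hexp : (1 : ℝ) ≤ 2 * Real.exp 1 := by
    have := Real.one_le_exp (by norm_num : (0:ℝ) ≤ 1)
    linarith
  calc (2 : ℝ) ^ (3 * (d : ℝ) / 16) / (2 * Real.exp 1) ≤ T := by
        rw [hT]; exact div_le_self hT0 hexp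
    _ ≤ matDisc A' := hdisc
    _ ≤ matHerDisc (Gmat d) := hher
end

section
/- For every positive integer d divisible by 8, herdisc(G_d) ≤ 2^{d/8} · herdisc(S^d), where herdisc(G_d) is the hereditary discrepancy of the matrix G_d and herdisc(S^d) is the hereditary discrepancy of the set system of subcubes of the boolean cube {0,1}^d. -/
lemma sysDisc_nonneg {U : Type*} [Fintype U] (S : Finset (Finset U)) : 0 ≤ sysDisc S := by
  apply le_csInf
  · exact ⟨⨆ T : {T // T ∈ S}, |∑ i ∈ T.1, (1:ℝ)|, fun _ => (1:ℝ), fun i => Or.inl rfl, rfl⟩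
  · rintro b ⟨f, hf, rfl⟩
    exact Real.iSup_nonneg fun T => abs_nonneg _

lemma sysDisc_exists {U : Type*} [Fintype U] (S : Finset (Finset U)) :
    ∃ f : U → ℝ, (∀ i, f i = 1 ∨ f i = -1) ∧
      sysDisc S = ⨆ T : {T // T ∈ S}, |∑ i ∈ T.1, f i| := by
  classical
  set A := {D : ℝ | ∃ f : U → ℝ, (∀ i, f i = 1 ∨ f i = -1) ∧
    D = ⨆ T : {T // T ∈ S}, |∑ i ∈ T.1, f i|} with hA
  have hne : A.Nonempty :=
    ⟨⨆ T : {T // T ∈ S}, |∑ i ∈ T.1, (1:ℝ)|, fun _ => (1:ℝ), fun i => Or.inl rfl, rfl⟩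
  have hfin : A.Finite := by
    apply Set.Finite.subset (Set.finite_range
      (fun g : U → Bool => ⨆ T : {T // T ∈ S}, |∑ i ∈ T.1, (if g i then (1:ℝ) else -1)|))
    rintro D ⟨f, hf, rfl⟩
    refine Set.mem_range.2 ⟨fun i => decide (f i = 1), ?_⟩
    refine congrArg _ (funext fun T => congrArg _ ?_)
    apply Finset.sum_congr rfl
    intro i _
    rcases hf i with h | h <;> simp [h] <;> norm_num
  have := hne.csInf_mem hfin
  rw [hA] at this
  obtain ⟨f, hf, h⟩ := this
  exact ⟨f, hf, h⟩

/-- For every positive integer `d` divisible by `8`,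
`herdisc(G_d) ≤ 2^{d/8} · herdisc(S^d)`. -/
theorem Gmat_herdisc_le_cubeSystem_herdisc (d : ℕ) (hd : 0 < d) (h8 : 8 ∣ d) :
    matHerDisc (Gmat d) ≤ (2 : ℝ) ^ ((d : ℝ) / 8) * sysHerDisc (cubeSystem d) := by
  classical
  set k := d / 8 with hk
  have hpow : (2:ℝ) ^ ((d : ℝ) / 8) = (2:ℝ) ^ (k : ℕ) := by
    obtain ⟨c, rfl⟩ := h8
    have h1 : ((8 * c : ℕ) : ℝ) / 8 = (c : ℝ) := by push_cast; ring
    have h2 : k = c := by rw [hk]; omega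
    rw [h1, h2, Real.rpow_natCast]
  rw [hpow]
  set H := sysHerDisc (cubeSystem d) with hH
  -- sysHerDisc bounds each restricted sysDisc
  have hHb : ∀ W : Finset (Fin d → Bool),
      sysDisc ((cubeSystem d).image (fun T => T ∩ W)) ≤ H := by
    intro W
    apply le_csSup
    · apply Set.Finite.bddAbove
      apply Set.Finite.subset (Set.finite_range
        (fun W : Finset (Fin d → Bool) => sysDisc ((cubeSystem d).image (fun T => T ∩ W))))
      rintro D ⟨W', rfl⟩
      exact ⟨W', rfl⟩
    · exact ⟨W, rfl⟩
  have hH0 : 0 ≤ H := le_trans (sysDisc_nonneg _) (hHb ∅)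
  apply Real.sSup_le
  · rintro D ⟨W, rfl⟩
    -- the restricted set system and its optimal coloring
    set S' := (cubeSystem d).image (fun T => T ∩ W) with hS'
    obtain ⟨f, hf, hfd⟩ := sysDisc_exists S'
    set s := sysDisc S' with hs
    have hs0 : 0 ≤ s := sysDisc_nonneg _
    have hsH : s ≤ H := hHb W
    -- each member's sum is bounded by s
    have hmem : ∀ T ∈ S', |∑ i ∈ T, f i| ≤ s := by
      intro T hT
      rw [hfd]
      exact le_ciSup (f := fun T : {T // T ∈ S'} => |∑ i ∈ T.1, f i|)
        (Set.Finite.bddAbove (Set.finite_range _)) (⟨T, hT⟩ : {T // T ∈ S'})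
    -- key row bound
    have hrow : ∀ v : {v : Fin d → Bool // wt v = k},
        |∑ u ∈ W, chi v.1 u * f u| ≤ (2:ℝ) ^ (k:ℕ) * s := by
      intro v
      set v0 := v.1 with hv0
      set ι := {i : Fin d // v0 i = true} with hι
      set va : (ι → Bool) → (Fin d → Option Bool) :=
        fun a i => if h : v0 i = true then some (a ⟨i, h⟩) else none with hva
      have hsub : ∀ (a : ι → Bool), subcube (va a) ∩ W
          = W.filter (fun u => ∀ i : ι, u i.1 = a i) := by
        intro a
        ext u
        simp only [Finset.mem_inter, Finset.mem_filter, subcube, Finset.mem_univ, true_and]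
        constructor
        · rintro ⟨h1, h2⟩
          refine ⟨h2, fun i => h1 i.1 (a i) ?_⟩
          simp [hva, i.2]
        · rintro ⟨h2, h1⟩
          refine ⟨fun i b hb => ?_, h2⟩
          simp only [hva] at hb
          by_cases h : v0 i = true
          · rw [dif_pos h] at hb
            rw [h1 ⟨i, h⟩]
            exact (Option.some_injective _ hb).symm ▸ rfl
          · rw [dif_neg h] at hb
            exact absurd hb (by simp)
      -- decomposition of the row sum
      have hdecomp : ∑ u ∈ W, chi v0 u * f u
          = ∑ a : ι → Bool, (-1:ℝ) ^ (Finset.univ.filter (fun i : ι => a i = true)).card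
              * ∑ u ∈ subcube (va a) ∩ W, f u := by
        have : ∀ a : ι → Bool, ∑ u ∈ subcube (va a) ∩ W, f u
            = ∑ u ∈ W, (if ∀ i : ι, u i.1 = a i then f u else 0) := by
          intro a
          rw [hsub a, Finset.sum_filter]
        simp_rw [this, Finset.mul_sum]
        rw [Finset.sum_comm]
        apply Finset.sum_congr rfl
        intro u _
        have key : ∀ a : ι → Bool,
            (-1:ℝ) ^ (Finset.univ.filter (fun i : ι => a i = true)).card
              * (if ∀ i : ι, u i.1 = a i then f u else 0)
            = if a = (fun i : ι => u i.1) then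
                (-1:ℝ) ^ (Finset.univ.filter (fun i : ι => a i = true)).card * f u else 0 := by
          intro a
          by_cases h : a = fun i : ι => u i.1
          · subst h; simp
          · rw [if_neg h, if_neg, mul_zero]
            intro hc
            exact h (funext fun i => (hc i).symm)
        simp_rw [key]
        rw [Finset.sum_ite_eq' Finset.univ (fun i : ι => u i.1)
          (fun a => (-1:ℝ) ^ (Finset.univ.filter (fun i : ι => a i = true)).card * f u)]
        rw [if_pos (Finset.mem_univ _)]
        have hcard : (Finset.univ.filter (fun i : ι => u i.1 = true)).card
            = (Finset.univ.filter (fun i : Fin d => v0 i = true ∧ u i = true)).card := by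
          apply Finset.card_bij (fun (i : ι) _ => i.1)
          · intro i hi
            simp only [Finset.mem_filter, Finset.mem_univ, true_and] at hi ⊢
            exact ⟨i.2, hi⟩
          · intro i _ j _ h
            exact Subtype.ext h
          · intro j hj
            simp only [Finset.mem_filter, Finset.mem_univ, true_and] at hj
            exact ⟨⟨j, hj.1⟩, by simp [hj.2], rfl⟩
        rw [chi, hcard]
      -- bound
      rw [hdecomp]
      calc |∑ a : ι → Bool, (-1:ℝ) ^ (Finset.univ.filter (fun i : ι => a i = true)).card
              * ∑ u ∈ subcube (va a) ∩ W, f u|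
          ≤ ∑ a : ι → Bool, |(-1:ℝ) ^ (Finset.univ.filter (fun i : ι => a i = true)).card
              * ∑ u ∈ subcube (va a) ∩ W, f u| := Finset.abs_sum_le_sum_abs _ _
        _ ≤ ∑ _a : ι → Bool, s := by
            apply Finset.sum_le_sum
            intro a _
            rw [abs_mul, abs_pow, abs_neg, abs_one, one_pow, one_mul]
            apply hmem
            rw [hS']
            apply Finset.mem_image_of_mem
            rw [cubeSystem]
            exact Finset.mem_image_of_mem _ (Finset.mem_univ (va a))
        _ = (2:ℝ) ^ (k:ℕ) * s := by
            rw [Finset.sum_const, Finset.card_univ, nsmul_eq_mul]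
            congr 1
            rw [Fintype.card_fun, Fintype.card_bool]
            have : Fintype.card ι = k := by
              show Fintype.card {i // v0 i = true} = k
              rw [Fintype.card_subtype]
              exact v.2
            rw [this]
            push_cast
            ring
    -- matDisc of the submatrix is at most the sup over rows with coloring f
    have hmd : matDisc ((Gmat d).submatrix id (fun i : {x // x ∈ W} => i.1))
        ≤ ⨆ v : {v : Fin d → Bool // wt v = k},
            |∑ i : {x // x ∈ W}, Gmat d v i.1 * f i.1| := by
      apply csInf_le
      · refine ⟨0, ?_⟩
        rintro D ⟨x, hx, rfl⟩
        exact Real.iSup_nonneg fun j => abs_nonneg _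
      · exact ⟨fun i => f i.1, fun i => hf i.1, rfl⟩
    refine le_trans hmd ?_
    apply Real.iSup_le
    · intro v
      have : ∑ i : {x // x ∈ W}, Gmat d v i.1 * f i.1 = ∑ u ∈ W, chi v.1 u * f u := by
        rw [← Finset.sum_coe_sort W (fun u => chi v.1 u * f u)]
        rfl
      rw [this]
      exact le_trans (hrow v) (mul_le_mul_of_nonneg_left hsH (by positivity))
    · positivity
  · positivity
end

section
/- Let d be a positive integer, let p_{1,0} < p_{1,1} < … < p_{d,0} < p_{d,1} be the first 2d primes, and for u ∈ {0,1}^d define b_u = Π_{i=1}^d p_{i, u_i}. For v ∈ {0,1,*}^d define a_v = Π_{i : v_i ≠ *} p_{i, v_i}. Then for every u ∈ {0,1}^d and v ∈ {0,1,*}^d, a_v divides b_u if and only if u ∈ S_v. -/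
/-- The first `2d` primes in increasing order, organized into `d` consecutive
pairs: `p_{i,b}` is the `(2i + b)`-th prime (0-indexed), so
`p_{1,0} < p_{1,1} < … < p_{d,0} < p_{d,1}`. -/
noncomputable def pPrime {d : ℕ} (i : Fin d) (b : Bool) : ℕ :=
  Nat.nth Nat.Prime (2 * (i : ℕ) + if b then 1 else 0)

/-- For `u ∈ {0,1}^d`, the squarefree integer `b_u = ∏_{i=1}^d p_{i, uᵢ}`. -/
noncomputable def bOf {d : ℕ} (u : Fin d → Bool) : ℕ :=
  ∏ i : Fin d, pPrime i (u i)

/-- For `v ∈ {0,1,*}^d` (where `*` is encoded as `none`), the integer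
`a_v = ∏_{i : vᵢ ≠ *} p_{i, vᵢ}`. -/
noncomputable def aOf {d : ℕ} (v : Fin d → Option Bool) : ℕ :=
  ∏ i : Fin d, (v i).elim 1 (fun b => pPrime i b)

lemma pPrime_prime {d : ℕ} (i : Fin d) (b : Bool) : (pPrime i b).Prime :=
  Nat.nth_mem_of_infinite Nat.infinite_setOf_prime _

lemma pPrime_inj {d : ℕ} {i j : Fin d} {b c : Bool}
    (h : pPrime i b = pPrime j c) : i = j ∧ b = c := by
  have h2 := Nat.nth_injective Nat.infinite_setOf_prime h
  cases b <;> cases c <;> simp at h2 <;>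
    first | exact ⟨Fin.ext (by omega), rfl⟩ | omega

/-- For every positive integer `d`, every `u ∈ {0,1}^d` and
every `v ∈ {0,1,*}^d`: `a_v ∣ b_u ↔ u ∈ S_v`. -/
theorem aOf_dvd_bOf_iff_mem_subcube (d : ℕ) (hd : 0 < d)
    (u : Fin d → Bool) (v : Fin d → Option Bool) :
    aOf v ∣ bOf u ↔ u ∈ subcube v := by
  simp only [subcube, Finset.mem_filter, Finset.mem_univ, true_and]
  constructor
  · intro hdvd i b hvi
    have h1 : pPrime i b ∣ aOf v := by
      have := Finset.dvd_prod_of_mem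
        (fun j => (v j).elim 1 (fun c => pPrime j c)) (Finset.mem_univ i)
      simpa [hvi, aOf] using this
    obtain ⟨j, -, hj⟩ :=
      (pPrime_prime i b).prime.exists_mem_finset_dvd (h1.trans hdvd)
    have heq : pPrime i b = pPrime j (u j) :=
      (Nat.prime_dvd_prime_iff_eq (pPrime_prime i b) (pPrime_prime j (u j))).mp hj
    obtain ⟨rfl, rfl⟩ := pPrime_inj heq
    rfl
  · intro h
    unfold aOf bOf
    apply Finset.prod_dvd_prod_of_dvd
    intro i _
    cases hvi : v i with
    | none => simp
    | some b => simp [h i b hvi]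
end
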